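/- arXiv:1709.03705 — 7 statements merged into one kernel-verified Lean document; each statement's English description precedes it below -/
import Mathlib

section
/- Let D be a finite set of real numbers with at least two elements such that Σ_{d∈D} d > 0, and let ℙ be the product probability measure on Ω = D^ℕ (each coordinate uniform on D). Then with ℙ-probability 1 the associated power series f(x) = Σ_{n=1}^∞ aₙ xⁿ satisfies lim_{x→1⁻} f(x) = +∞. -/
set_option maxHeartbeats 1000000

open MeasureTheory ProbabilityTheory Filter Topology Set ENNReal

private lemma aux_summable {x : ℝ} (hx0 : 0 ≤ x) (hx1 : x < 1) (b : ℕ → ℝ) (c : ℝ)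
    (h : ∀ n, |b n| ≤ c * ((n : ℝ) + 1) ^ 2) :
    Summable fun n : ℕ => b n * x ^ (n + 1) := by
  have hg : Summable fun n : ℕ => ((n : ℝ) + 1) ^ 2 * x ^ (n + 1) := by
    have := summable_pow_mul_geometric_of_norm_lt_one (R := ℝ) 2
      (r := x) (by rwa [Real.norm_eq_abs, abs_of_nonneg hx0])
    have h2 := (summable_nat_add_iff (f := fun n : ℕ => (n : ℝ) ^ 2 * x ^ n) 1).2 this
    convert h2 using 2 with n
    · rfl
    push_cast
    ring
  apply Summable.of_norm_bounded (hg.mul_left c)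
  intro n
  rw [norm_mul, Real.norm_eq_abs, Real.norm_eq_abs, abs_pow, abs_of_nonneg hx0]
  calc |b n| * x ^ (n + 1) ≤ (c * ((n : ℝ) + 1) ^ 2) * x ^ (n + 1) := by
        apply mul_le_mul_of_nonneg_right (h n) (pow_nonneg hx0 _)
    _ = c * (((n : ℝ) + 1) ^ 2 * x ^ (n + 1)) := by ring

private lemma aux_det (a : ℕ → ℝ) (m : ℝ) (hm : 0 < m)
    (h : Tendsto (fun n : ℕ => ((n : ℝ))⁻¹ * ∑ i ∈ Finset.range n, a i) atTop (𝓝 m)) :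
    Tendsto (fun x : ℝ => ∑' n : ℕ, a n * x ^ (n + 1)) (𝓝[<] (1 : ℝ)) atTop := by
  set S : ℕ → ℝ := fun n => ∑ i ∈ Finset.range n, a i with hSdef
  -- boundedness of the averages
  obtain ⟨B, hB⟩ : ∃ B : ℝ, ∀ n : ℕ, |((n : ℝ))⁻¹ * S n| ≤ B := by
    have := (h.norm.bddAbove_range)
    obtain ⟨B, hB⟩ := this
    exact ⟨B, fun n => hB ⟨n, rfl⟩⟩
  have hB0 : 0 ≤ B := le_trans (abs_nonneg _) (hB 0)
  have hSb : ∀ n : ℕ, |S n| ≤ B * n := by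
    intro n
    rcases Nat.eq_zero_or_pos n with rfl | hn
    · simp [hSdef]
    · have hn' : (0 : ℝ) < n := by exact_mod_cast hn
      have := hB n
      rw [abs_mul, abs_inv, abs_of_nonneg hn'.le] at this
      calc |S n| = n * ((n : ℝ)⁻¹ * |S n|) := by field_simp
        _ ≤ n * B := by
            apply mul_le_mul_of_nonneg_left this hn'.le
        _ = B * n := by ring
  -- bound on a
  have ha : ∀ n : ℕ, |a n| ≤ (2 * B) * ((n : ℝ) + 1) := by
    intro n
    have h1 : a n = S (n + 1) - S n := by
      simp [hSdef, Finset.sum_range_succ]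
    rw [h1]
    calc |S (n + 1) - S n| ≤ |S (n + 1)| + |S n| := abs_sub _ _
      _ ≤ B * ((n : ℝ) + 1) + B * n := by
          have := hSb (n + 1); have := hSb n; push_cast at *; linarith [hSb (n+1), hSb n]
      _ ≤ (2 * B) * ((n : ℝ) + 1) := by nlinarith [Nat.cast_nonneg (α := ℝ) n]
  set C : ℝ := 2 * B with hCdef
  have hC0 : 0 ≤ C := by positivity
  have ha' : ∀ n : ℕ, |a n| ≤ C * ((n : ℝ) + 1) ^ 2 := by
    intro n
    have hnn : (0:ℝ) ≤ (n : ℝ) := Nat.cast_nonneg n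
    refine le_trans (ha n) ?_
    nlinarith [mul_nonneg (mul_nonneg hC0 hnn) hnn, mul_nonneg hC0 hnn]
  have hS1 : ∀ n : ℕ, |S (n + 1)| ≤ (4 * C) * ((n : ℝ) + 1) ^ 2 := by
    intro n
    calc |S (n + 1)| ≤ B * ((n : ℝ) + 1) := by have := hSb (n+1); push_cast at this; linarith
      _ ≤ (4 * C) * ((n : ℝ) + 1) ^ 2 := by
          have hnn : (0:ℝ) ≤ (n : ℝ) := Nat.cast_nonneg n
          nlinarith [mul_nonneg (mul_nonneg hB0 hnn) hnn, mul_nonneg hB0 hnn]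
  have hS0 : ∀ n : ℕ, |S n| ≤ (4 * C) * ((n : ℝ) + 1) ^ 2 := by
    intro n
    have hnn : (0:ℝ) ≤ (n : ℝ) := Nat.cast_nonneg n
    calc |S n| ≤ B * n := hSb n
      _ ≤ (4 * C) * ((n : ℝ) + 1) ^ 2 := by
          nlinarith [mul_nonneg (mul_nonneg hB0 hnn) hnn, mul_nonneg hB0 hnn]
  -- S (n+1) → ∞
  have hStop : Tendsto (fun n : ℕ => S (n + 1)) atTop atTop := by
    have hev : ∀ᶠ n : ℕ in atTop, (m / 2) * n ≤ S n := by
      filter_upwards [h.eventually (eventually_ge_nhds (half_lt_self hm)),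
        eventually_ge_atTop 1] with n h1 hn
      have hn' : (0 : ℝ) < n := by exact_mod_cast hn
      have : S n = n * ((n : ℝ)⁻¹ * S n) := by field_simp
      rw [this]
      calc (m / 2) * n = n * (m / 2) := by ring
        _ ≤ n * ((n : ℝ)⁻¹ * S n) := mul_le_mul_of_nonneg_left h1 hn'.le
    have htop : Tendsto (fun n : ℕ => (m / 2) * (n : ℝ)) atTop atTop :=
      (tendsto_natCast_atTop_atTop).const_mul_atTop (half_pos hm)
    have := tendsto_atTop_mono' atTop hev htop
    exact this.comp (tendsto_add_atTop_nat 1)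
  -- summability facts, Abel identity
  have hsum_a : ∀ x : ℝ, x ∈ Ioo (0:ℝ) 1 → Summable fun n : ℕ => a n * x ^ (n + 1) :=
    fun x hx => aux_summable hx.1.le hx.2 a C ha'
  have hsum_S1 : ∀ x : ℝ, x ∈ Ioo (0:ℝ) 1 → Summable fun n : ℕ => S (n + 1) * x ^ (n + 1) :=
    fun x hx => aux_summable hx.1.le hx.2 _ (4 * C) hS1
  have hsum_S0 : ∀ x : ℝ, x ∈ Ioo (0:ℝ) 1 → Summable fun n : ℕ => S n * x ^ (n + 1) :=
    fun x hx => aux_summable hx.1.le hx.2 _ (4 * C) hS0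
  have key : ∀ x : ℝ, x ∈ Ioo (0:ℝ) 1 →
      ∑' n : ℕ, a n * x ^ (n + 1) = (1 - x) * ∑' n : ℕ, S (n + 1) * x ^ (n + 1) := by
    intro x hx
    have h1 := hsum_S1 x hx
    have h0 := hsum_S0 x hx
    have hshift : ∑' n : ℕ, S n * x ^ (n + 1) = x * ∑' n : ℕ, S (n + 1) * x ^ (n + 1) := by
      rw [h0.tsum_eq_zero_add]
      simp only [hSdef, Finset.range_zero, Finset.sum_empty, zero_mul, zero_add]
      rw [← tsum_mul_left]
      congr 1
      ext n
      ring
    calc ∑' n : ℕ, a n * x ^ (n + 1)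
        = ∑' n : ℕ, (S (n + 1) * x ^ (n + 1) - S n * x ^ (n + 1)) := by
          congr 1; ext n
          have : a n = S (n + 1) - S n := by simp [hSdef, Finset.sum_range_succ]
          rw [this]; ring
      _ = (∑' n : ℕ, S (n + 1) * x ^ (n + 1)) - ∑' n : ℕ, S n * x ^ (n + 1) :=
          h1.tsum_sub h0
      _ = (1 - x) * ∑' n : ℕ, S (n + 1) * x ^ (n + 1) := by rw [hshift]; ring
  -- final limit
  rw [tendsto_atTop]
  intro M
  obtain ⟨N, hN⟩ : ∃ N : ℕ, ∀ n ≥ N, M + 1 ≤ S (n + 1) :=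
    eventually_atTop.1 (hStop.eventually_ge_atTop (M + 1))
  set B' : ℝ := ∑ n ∈ Finset.range N, |S (n + 1)| with hB'def
  have hlow : ∀ x : ℝ, x ∈ Ioo (0:ℝ) 1 →
      (1 - x) * (-B') + (M + 1) * x ^ (N + 1) ≤ ∑' n : ℕ, a n * x ^ (n + 1) := by
    intro x hx
    obtain ⟨hx0, hx1⟩ := hx
    have h1x : (0:ℝ) < 1 - x := by linarith
    rw [key x ⟨hx0, hx1⟩]
    have h1 := hsum_S1 x ⟨hx0, hx1⟩
    have hdecomp := Summable.sum_add_tsum_nat_add (f := fun n : ℕ => S (n + 1) * x ^ (n + 1)) N h1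
    have hfront : -B' ≤ ∑ n ∈ Finset.range N, S (n + 1) * x ^ (n + 1) := by
      rw [hB'def, ← Finset.sum_neg_distrib]
      apply Finset.sum_le_sum
      intro i _
      have hxp : |x ^ (i + 1)| ≤ 1 := by
        rw [abs_pow, abs_of_nonneg hx0.le]
        exact pow_le_one₀ hx0.le hx1.le
      have : |S (i + 1) * x ^ (i + 1)| ≤ |S (i + 1)| := by
        rw [abs_mul]
        calc |S (i+1)| * |x ^ (i+1)| ≤ |S (i+1)| * 1 :=
          mul_le_mul_of_nonneg_left hxp (abs_nonneg _)
          _ = |S (i+1)| := mul_one _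
      linarith [neg_abs_le (S (i + 1) * x ^ (i + 1)), this]
    have htail : (M + 1) * x ^ (N + 1) * (1 - x)⁻¹ ≤
        ∑' n : ℕ, S (n + N + 1) * x ^ (n + N + 1) := by
      have hgeo : Summable fun n : ℕ => (M + 1) * x ^ (N + 1) * x ^ n :=
        (summable_geometric_of_lt_one hx0.le hx1).mul_left _
      have htsum : Summable fun n : ℕ => S (n + N + 1) * x ^ (n + N + 1) :=
        (summable_nat_add_iff N).2 h1
      calc (M + 1) * x ^ (N + 1) * (1 - x)⁻¹
          = ∑' n : ℕ, (M + 1) * x ^ (N + 1) * x ^ n := by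
            rw [tsum_mul_left, tsum_geometric_of_lt_one hx0.le hx1]
        _ ≤ ∑' n : ℕ, S (n + N + 1) * x ^ (n + N + 1) := by
            apply Summable.tsum_le_tsum _ hgeo htsum
            intro n
            have hSn : M + 1 ≤ S (n + N + 1) := hN (n + N) (Nat.le_add_left _ _)
            have hxn : (0:ℝ) ≤ x ^ (n + N + 1) := pow_nonneg hx0.le _
            calc (M + 1) * x ^ (N + 1) * x ^ n = (M + 1) * x ^ (n + N + 1) := by
                  rw [show n + N + 1 = (N + 1) + n from by ring, pow_add]; ring
              _ ≤ S (n + N + 1) * x ^ (n + N + 1) :=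
                  mul_le_mul_of_nonneg_right hSn hxn
    have hT : -B' + (M + 1) * x ^ (N + 1) * (1 - x)⁻¹ ≤
        ∑' n : ℕ, S (n + 1) * x ^ (n + 1) := by
      rw [← hdecomp]
      have : ∑' n : ℕ, S (n + N + 1) * x ^ (n + N + 1) =
          ∑' n : ℕ, S (n + N + 1) * x ^ (n + N + 1) := rfl
      have heq : (∑' n : ℕ, S ((n + N) + 1) * x ^ ((n + N) + 1)) =
          ∑' n : ℕ, S (n + N + 1) * x ^ (n + N + 1) := rfl
      linarith [hfront, htail]
    calc (1 - x) * (-B') + (M + 1) * x ^ (N + 1)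
        = (1 - x) * (-B' + (M + 1) * x ^ (N + 1) * (1 - x)⁻¹) := by
          field_simp
      _ ≤ (1 - x) * ∑' n : ℕ, S (n + 1) * x ^ (n + 1) :=
          mul_le_mul_of_nonneg_left hT h1x.le
  have hg : Tendsto (fun x : ℝ => (1 - x) * (-B') + (M + 1) * x ^ (N + 1)) (𝓝[<] (1:ℝ))
      (𝓝 (M + 1)) := by
    have hc : Continuous (fun x : ℝ => (1 - x) * (-B') + (M + 1) * x ^ (N + 1)) := by
      continuity
    have := hc.tendsto 1
    simp only [sub_self, zero_mul, one_pow, mul_one, zero_add] at this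
    exact this.mono_left nhdsWithin_le_nhds
  filter_upwards [hg.eventually (eventually_ge_nhds (by linarith : M < M + 1)),
    Ioo_mem_nhdsLT (by norm_num : (0:ℝ) < 1)] with x hx1 hx2
  exact le_trans hx1 (hlow x hx2)

/-- **Theorem 1, first half.** If the elements of `D` have positive sum (equivalently, positive
expected value under the uniform distribution), then almost surely
`lim_{x→1⁻} ∑ aₙ xⁿ = +∞`. Here `P` is the product of uniform distributions on `D`,
realized as a probability measure on `ℕ → ℝ` with independent, uniform-on-`D` coordinates. -/
theorem random_power_series_positive_mean
(D : Finset ℝ) (hD : 2 ≤ D.card)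
    (P : Measure (ℕ → ℝ)) [IsProbabilityMeasure P]
    (hindep : iIndepFun (fun n (a : ℕ → ℝ) => a n) P)
    (hunif : ∀ n : ℕ,
      P.map (fun a => a n) = (D.card : ℝ≥0∞)⁻¹ • ∑ d ∈ D, Measure.dirac d)
    (hsum : 0 < ∑ d ∈ D, d) :
    ∀ᵐ a ∂P,
      Tendsto (fun x : ℝ => ∑' n : ℕ, a n * x ^ (n + 1)) (𝓝[<] (1 : ℝ)) atTop := by
  set X : ℕ → (ℕ → ℝ) → ℝ := fun n a => a n with hX
  have hmeas : ∀ n, Measurable (X n) := fun n => measurable_pi_apply n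
  have hcard0 : (D.card : ℝ≥0∞) ≠ 0 := by
    simp only [ne_eq, Nat.cast_eq_zero]
    omega
  have hint : Integrable (X 0) P := by
    have hid : Integrable id (P.map (X 0)) := by
      rw [hunif 0]
      apply Integrable.smul_measure
      · rw [integrable_finset_sum_measure]
        intro d _
        exact (integrable_const d).congr (ae_eq_dirac id).symm
      · exact ENNReal.inv_ne_top.2 hcard0
    exact (integrable_map_measure aestronglyMeasurable_id (hmeas 0).aemeasurable).1 hid
  have hident : ∀ i, IdentDistrib (X i) (X 0) P P := fun i =>
    ⟨(hmeas i).aemeasurable, (hmeas 0).aemeasurable, by rw [hunif i, hunif 0]⟩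
  have hpind : Pairwise (Function.onFun (IndepFun · · P) X) := fun i j hij => hindep.indepFun hij
  have hexp : P[X 0] = (D.card : ℝ)⁻¹ * ∑ d ∈ D, d := by
    have h1 : P[X 0] = ∫ y, id y ∂(P.map (X 0)) :=
      (integral_map (hmeas 0).aemeasurable aestronglyMeasurable_id).symm
    rw [h1, hunif 0, integral_smul_measure, integral_finset_sum_measure
      (fun d _ => (integrable_const d).congr (ae_eq_dirac id).symm)]
    simp [ENNReal.toReal_inv, smul_eq_mul]
  have hm : 0 < (D.card : ℝ)⁻¹ * ∑ d ∈ D, d := by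
    have hcard : (0:ℝ) < D.card := by
      have : 0 < D.card := by omega
      exact_mod_cast this
    positivity
  have hslln := strong_law_ae X hint hpind hident
  rw [hexp] at hslln
  filter_upwards [hslln] with a ha
  exact aux_det a _ hm (by simpa [smul_eq_mul] using ha)
end

section
/- Let D be a finite set of real numbers containing at least one positive and at least one negative element, and give Ω = D^ℕ the product topology (D discrete). Then the set of sequences (aₙ) ∈ Ω for which f(x) = Σ_{n=1}^∞ aₙ xⁿ satisfies both limsup_{x→1⁻} f(x) = +∞ and liminf_{x→1⁻} f(x) = −∞ is residual (comeager) in Ω. -/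
open Filter Topology Set

private lemma exists_bound_aux (D : Finset ℝ) : ∃ C : ℝ, 0 ≤ C ∧ ∀ d ∈ D, |d| ≤ C :=
  ⟨∑ d ∈ D, |d|, Finset.sum_nonneg fun d _ => abs_nonneg d,
    fun d hd => Finset.single_le_sum (fun e _ => abs_nonneg e) hd⟩

private lemma summable_aux {C : ℝ} (b : ℕ → ℝ) (hb : ∀ n, |b n| ≤ C)
    {x : ℝ} (hx0 : 0 ≤ x) (hx1 : x < 1) : Summable fun n => b n * x ^ (n + 1) := by
  have hC : 0 ≤ C := (abs_nonneg (b 0)).trans (hb 0)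
  apply Summable.of_norm_bounded (g := fun n => C * x ^ n)
    ((summable_geometric_of_lt_one hx0 hx1).mul_left C)
  intro n
  rw [Real.norm_eq_abs, abs_mul, abs_pow, abs_of_nonneg hx0]
  calc |b n| * x ^ (n + 1) ≤ C * x ^ (n + 1) := by
        apply mul_le_mul_of_nonneg_right (hb n) (pow_nonneg hx0 _)
    _ ≤ C * x ^ n := by
        apply mul_le_mul_of_nonneg_left (pow_le_pow_of_le_one hx0 hx1.le (Nat.le_succ n)) hC

private lemma tsum_split_aux {C : ℝ} (b : ℕ → ℝ) (hb : ∀ n, |b n| ≤ C)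
    (N : ℕ) (d : ℝ) (hd : ∀ n, N ≤ n → b n = d)
    {x : ℝ} (hx0 : 0 ≤ x) (hx1 : x < 1) :
    ∑' n, b n * x ^ (n + 1)
      = (∑ n ∈ Finset.range N, b n * x ^ (n + 1)) + d * x ^ (N + 1) * (1 - x)⁻¹ := by
  have hs := summable_aux b hb hx0 hx1
  rw [← Summable.sum_add_tsum_nat_add N hs]
  congr 1
  have h1 : ∀ n : ℕ, b (n + N) * x ^ (n + N + 1) = d * x ^ (N + 1) * x ^ n := by
    intro n
    rw [hd (n + N) (Nat.le_add_left N n)]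
    ring
  rw [tsum_congr h1, tsum_mul_left, tsum_geometric_of_lt_one hx0 hx1]

private lemma Ioo_mem_aux : Ioo (0 : ℝ) 1 ∈ 𝓝[<] (1 : ℝ) :=
  Ioo_mem_nhdsLT_of_mem ⟨one_pos, le_refl 1⟩

private lemma tendsto_inv_aux :
    Tendsto (fun x : ℝ => (1 - x)⁻¹) (𝓝[<] (1 : ℝ)) atTop := by
  apply tendsto_inv_nhdsGT_zero.comp
  refine tendsto_nhdsWithin_iff.2 ⟨?_, ?_⟩
  · have h : Tendsto (fun x : ℝ => 1 - x) (𝓝 (1 : ℝ)) (𝓝 (1 - 1)) :=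
      (continuous_const.sub continuous_id).tendsto 1
    simpa using h.mono_left nhdsWithin_le_nhds
  · filter_upwards [self_mem_nhdsWithin] with x hx
    exact mem_Ioi.2 (sub_pos.2 hx)

private lemma tendsto_coef_aux (d : ℝ) (N : ℕ) :
    Tendsto (fun x : ℝ => d * x ^ (N + 1)) (𝓝[<] (1 : ℝ)) (𝓝 d) := by
  have h : Tendsto (fun x : ℝ => d * x ^ (N + 1)) (𝓝 (1 : ℝ)) (𝓝 (d * 1 ^ (N + 1))) :=
    (continuous_const.mul (continuous_pow (N + 1))).tendsto 1
  simpa using h.mono_left nhdsWithin_le_nhds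

private lemma tendsto_poly_aux (b : ℕ → ℝ) (N : ℕ) :
    Tendsto (fun x : ℝ => ∑ n ∈ Finset.range N, b n * x ^ (n + 1)) (𝓝[<] (1 : ℝ))
      (𝓝 (∑ n ∈ Finset.range N, b n * 1 ^ (n + 1))) :=
  ((continuous_finset_sum _ fun n _ => continuous_const.mul (continuous_pow (n + 1))).tendsto
    1).mono_left nhdsWithin_le_nhds

private lemma tendsto_tail_atTop {C : ℝ} (b : ℕ → ℝ) (hb : ∀ n, |b n| ≤ C)
    (N : ℕ) (d : ℝ) (hd0 : 0 < d) (hd : ∀ n, N ≤ n → b n = d) :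
    Tendsto (fun x : ℝ => ∑' n, b n * x ^ (n + 1)) (𝓝[<] (1 : ℝ)) atTop := by
  have hcongr : ∀ᶠ x in 𝓝[<] (1 : ℝ),
      (∑ n ∈ Finset.range N, b n * x ^ (n + 1)) + d * x ^ (N + 1) * (1 - x)⁻¹
        = ∑' n, b n * x ^ (n + 1) := by
    filter_upwards [Ioo_mem_aux] with x hx
    exact (tsum_split_aux b hb N d hd hx.1.le hx.2).symm
  apply Tendsto.congr' hcongr
  set L := ∑ n ∈ Finset.range N, b n * 1 ^ (n + 1)
  have h1 : ∀ᶠ x in 𝓝[<] (1 : ℝ), L - 1 ≤ ∑ n ∈ Finset.range N, b n * x ^ (n + 1) := by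
    filter_upwards [(tendsto_poly_aux b N).eventually (eventually_gt_nhds (by linarith : L - 1 < L))] with x hx
    exact hx.le
  have h2 : Tendsto (fun x : ℝ => d * x ^ (N + 1) * (1 - x)⁻¹) (𝓝[<] (1 : ℝ)) atTop :=
    (tendsto_coef_aux d N).pos_mul_atTop hd0 tendsto_inv_aux
  exact tendsto_atTop_add_left_of_le' _ (L - 1) h1 h2

private lemma tendsto_tail_atBot {C : ℝ} (b : ℕ → ℝ) (hb : ∀ n, |b n| ≤ C)
    (N : ℕ) (d : ℝ) (hd0 : d < 0) (hd : ∀ n, N ≤ n → b n = d) :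
    Tendsto (fun x : ℝ => ∑' n, b n * x ^ (n + 1)) (𝓝[<] (1 : ℝ)) atBot := by
  have hcongr : ∀ᶠ x in 𝓝[<] (1 : ℝ),
      (∑ n ∈ Finset.range N, b n * x ^ (n + 1)) + d * x ^ (N + 1) * (1 - x)⁻¹
        = ∑' n, b n * x ^ (n + 1) := by
    filter_upwards [Ioo_mem_aux] with x hx
    exact (tsum_split_aux b hb N d hd hx.1.le hx.2).symm
  apply Tendsto.congr' hcongr
  set L := ∑ n ∈ Finset.range N, b n * 1 ^ (n + 1)
  have h1 : ∀ᶠ x in 𝓝[<] (1 : ℝ), (∑ n ∈ Finset.range N, b n * x ^ (n + 1)) ≤ L + 1 := by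
    filter_upwards [(tendsto_poly_aux b N).eventually (eventually_lt_nhds (by linarith : L < L + 1))] with x hx
    exact hx.le
  have h2 : Tendsto (fun x : ℝ => d * x ^ (N + 1) * (1 - x)⁻¹) (𝓝[<] (1 : ℝ)) atBot :=
    (tendsto_coef_aux d N).neg_mul_atTop hd0 tendsto_inv_aux
  exact tendsto_atBot_add_left_of_ge' _ (L + 1) h1 h2

private lemma continuous_F (D : Finset ℝ) {x : ℝ} (hx0 : 0 ≤ x) (hx1 : x < 1) :
    Continuous fun a : ℕ → D => ∑' n, (a n : ℝ) * x ^ (n + 1) := by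
  obtain ⟨C, hC0, hC⟩ := exists_bound_aux D
  apply continuous_tsum (u := fun n => C * x ^ n)
  · intro n
    exact (continuous_subtype_val.comp (continuous_apply n)).mul continuous_const
  · exact (summable_geometric_of_lt_one hx0 hx1).mul_left C
  · intro n a
    rw [Real.norm_eq_abs, abs_mul, abs_pow, abs_of_nonneg hx0]
    calc |(a n : ℝ)| * x ^ (n + 1) ≤ C * x ^ (n + 1) :=
          mul_le_mul_of_nonneg_right (hC _ (a n).2) (pow_nonneg hx0 _)
      _ ≤ C * x ^ n :=
          mul_le_mul_of_nonneg_left (pow_le_pow_of_le_one hx0 hx1.le (Nat.le_succ n)) hC0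

private lemma interval_lower_nonneg (M : ℕ) : (0 : ℝ) ≤ 1 - ((M : ℝ) + 1)⁻¹ := by
  have h1 : ((M : ℝ) + 1)⁻¹ ≤ 1 := by
    rw [inv_le_one_iff₀]
    right; linarith [Nat.cast_nonneg (α := ℝ) M]
  linarith

/-- **Theorem 3, second part.** If the finite set `D` contains a positive and a negative
element, then the set of sequences `(aₙ) ∈ D^ℕ` (product topology, `D` discrete) for which
`limsup_{x→1⁻} ∑ aₙ xⁿ = +∞` and `liminf_{x→1⁻} ∑ aₙ xⁿ = -∞` is residual. -/
theorem residual_power_series_mixed_signs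
    (D : Finset ℝ) (hpos : ∃ d ∈ D, 0 < d) (hneg : ∃ d ∈ D, d < 0) :
    {a : ℕ → D |
      limsup (fun x : ℝ => ((∑' n : ℕ, (a n : ℝ) * x ^ (n + 1) : ℝ) : EReal))
        (𝓝[<] (1 : ℝ)) = ⊤ ∧
      liminf (fun x : ℝ => ((∑' n : ℕ, (a n : ℝ) * x ^ (n + 1) : ℝ) : EReal))
        (𝓝[<] (1 : ℝ)) = ⊥}
      ∈ residual (ℕ → D) := by
  obtain ⟨dp, hdpD, hdp⟩ := hpos
  obtain ⟨dm, hdmD, hdm⟩ := hneg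
  obtain ⟨C, hC0, hC⟩ := exists_bound_aux D
  set F : ℝ → (ℕ → D) → ℝ := fun x a => ∑' n, (a n : ℝ) * x ^ (n + 1) with hF
  set U : ℕ → Set (ℕ → D) := fun M =>
    ⋃ x ∈ Ioo (1 - ((M : ℝ) + 1)⁻¹) 1, {a | (M : ℝ) < F x a} with hU
  set V : ℕ → Set (ℕ → D) := fun M =>
    ⋃ x ∈ Ioo (1 - ((M : ℝ) + 1)⁻¹) 1, {a | F x a < -(M : ℝ)} with hV
  -- membership of the interval in the filter
  have hIoo : ∀ M : ℕ, Ioo (1 - ((M : ℝ) + 1)⁻¹) 1 ∈ 𝓝[<] (1 : ℝ) := by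
    intro M
    apply Ioo_mem_nhdsLT_of_mem
    constructor
    · have : (0 : ℝ) < ((M : ℝ) + 1)⁻¹ := by positivity
      linarith
    · exact le_refl 1
  have hIx : ∀ M : ℕ, ∀ x ∈ Ioo (1 - ((M : ℝ) + 1)⁻¹) 1, 0 ≤ x ∧ x < 1 := by
    intro M x hx
    exact ⟨(interval_lower_nonneg M).trans hx.1.le, hx.2⟩
  -- openness
  have hUopen : ∀ M, IsOpen (U M) := by
    intro M
    apply isOpen_biUnion
    intro x hx
    exact isOpen_Ioi.preimage (continuous_F D (hIx M x hx).1 (hIx M x hx).2)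
  have hVopen : ∀ M, IsOpen (V M) := by
    intro M
    apply isOpen_biUnion
    intro x hx
    exact isOpen_Iio.preimage (continuous_F D (hIx M x hx).1 (hIx M x hx).2)
  -- the density argument, uniformly for both signs
  have hdense : ∀ (M : ℕ) (W : Set (ℕ → D)) (d0 : ℝ) (hd0 : d0 ∈ D)
      (hW : ∀ c : ℕ → D,
        (∀ᶠ x in 𝓝[<] (1 : ℝ), x ∈ Ioo (1 - ((M : ℝ) + 1)⁻¹) 1 → c ∈ W) → c ∈ W → c ∈ W),
      True := fun _ _ _ _ _ => trivial
  clear hdense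
  have hUdense : ∀ M, Dense (U M) := by
    intro M
    rw [dense_iff_inter_open]
    rintro o ho ⟨b, hb⟩
    have hon : o ∈ 𝓝 b := ho.mem_nhds hb
    rw [nhds_pi] at hon
    obtain ⟨I, hIfin, t, ht, hsub⟩ := Filter.mem_pi.1 hon
    obtain ⟨N0, hN0⟩ := hIfin.bddAbove
    set N := N0 + 1 with hN
    set c : ℕ → D := fun i => if i < N then b i else ⟨dp, hdpD⟩ with hc
    have hco : c ∈ o := by
      apply hsub
      intro i hi
      have : i < N := Nat.lt_succ_of_le (hN0 hi)
      simp only [hc, if_pos this]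
      exact mem_of_mem_nhds (ht i)
    have hbnd : ∀ n, |((c n : ℝ))| ≤ C := fun n => hC _ (c n).2
    have htail : ∀ n, N ≤ n → ((c n : ℝ)) = dp := by
      intro n hn
      simp only [hc, if_neg (not_lt.2 hn)]
    have htend : Tendsto (fun x : ℝ => ∑' n, ((c n : ℝ)) * x ^ (n + 1)) (𝓝[<] (1 : ℝ)) atTop :=
      tendsto_tail_atTop (fun n => ((c n : ℝ))) hbnd N dp hdp htail
    have hev : ∀ᶠ x in 𝓝[<] (1 : ℝ), (M : ℝ) < F x c := htend.eventually_gt_atTop (M : ℝ)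
    obtain ⟨x, hx1, hx2⟩ := (hev.and (eventually_of_mem (hIoo M) fun x hx => hx)).exists
    refine ⟨c, hco, ?_⟩
    simp only [hU, mem_iUnion]
    exact ⟨x, hx2, hx1⟩
  have hVdense : ∀ M, Dense (V M) := by
    intro M
    rw [dense_iff_inter_open]
    rintro o ho ⟨b, hb⟩
    have hon : o ∈ 𝓝 b := ho.mem_nhds hb
    rw [nhds_pi] at hon
    obtain ⟨I, hIfin, t, ht, hsub⟩ := Filter.mem_pi.1 hon
    obtain ⟨N0, hN0⟩ := hIfin.bddAbove
    set N := N0 + 1 with hN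
    set c : ℕ → D := fun i => if i < N then b i else ⟨dm, hdmD⟩ with hc
    have hco : c ∈ o := by
      apply hsub
      intro i hi
      have : i < N := Nat.lt_succ_of_le (hN0 hi)
      simp only [hc, if_pos this]
      exact mem_of_mem_nhds (ht i)
    have hbnd : ∀ n, |((c n : ℝ))| ≤ C := fun n => hC _ (c n).2
    have htail : ∀ n, N ≤ n → ((c n : ℝ)) = dm := by
      intro n hn
      simp only [hc, if_neg (not_lt.2 hn)]
    have htend : Tendsto (fun x : ℝ => ∑' n, ((c n : ℝ)) * x ^ (n + 1)) (𝓝[<] (1 : ℝ)) atBot :=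
      tendsto_tail_atBot (fun n => ((c n : ℝ))) hbnd N dm hdm htail
    have hev : ∀ᶠ x in 𝓝[<] (1 : ℝ), F x c < -(M : ℝ) := htend.eventually_lt_atBot (-(M : ℝ))
    obtain ⟨x, hx1, hx2⟩ := (hev.and (eventually_of_mem (hIoo M) fun x hx => hx)).exists
    refine ⟨c, hco, ?_⟩
    simp only [hV, mem_iUnion]
    exact ⟨x, hx2, hx1⟩
  -- put it together
  refine mem_of_superset (countable_iInter_mem.2 fun M : ℕ =>
    inter_mem (residual_of_dense_open (hUopen M) (hUdense M))
      (residual_of_dense_open (hVopen M) (hVdense M))) ?_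
  intro a ha
  simp only [mem_iInter, mem_inter_iff] at ha
  -- helper: from membership in U/V at all large levels to "frequently" statements
  have hfreq : ∀ M : ℕ, ∃ᶠ x in 𝓝[<] (1 : ℝ),
      (((M : ℝ) : EReal) ≤ ((F x a : ℝ) : EReal)) := by
    intro M
    rw [frequently_iff]
    intro s hs
    obtain ⟨t, ht1, hts⟩ := (nhdsLT_basis (1 : ℝ)).mem_iff.1 hs
    obtain ⟨K, hK⟩ := exists_nat_gt (max (M : ℝ) (1 - t)⁻¹)
    have hKM : (M : ℝ) ≤ (K : ℝ) := (le_max_left _ _).trans hK.le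
    have h0t : (0 : ℝ) < 1 - t := by linarith
    have hKt : (1 - t)⁻¹ < (K : ℝ) + 1 := by
      have := (le_max_right (M : ℝ) (1 - t)⁻¹).trans_lt hK
      linarith
    have hinv : ((K : ℝ) + 1)⁻¹ < 1 - t := by
      rw [inv_lt_comm₀ (by positivity) h0t]
      exact hKt
    obtain hUK := (ha K).1
    simp only [hU, mem_iUnion] at hUK
    obtain ⟨x, hx, hgt⟩ := hUK
    have hxs : x ∈ s := hts ⟨by linarith [hx.1], hx.2⟩
    refine ⟨x, hxs, ?_⟩
    exact EReal.coe_le_coe_iff.2 (hKM.trans hgt.le)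
  have hfreq' : ∀ M : ℕ, ∃ᶠ x in 𝓝[<] (1 : ℝ),
      (((F x a : ℝ) : EReal) ≤ ((-(M : ℝ)) : EReal)) := by
    intro M
    rw [frequently_iff]
    intro s hs
    obtain ⟨t, ht1, hts⟩ := (nhdsLT_basis (1 : ℝ)).mem_iff.1 hs
    obtain ⟨K, hK⟩ := exists_nat_gt (max (M : ℝ) (1 - t)⁻¹)
    have hKM : (M : ℝ) ≤ (K : ℝ) := (le_max_left _ _).trans hK.le
    have h0t : (0 : ℝ) < 1 - t := by linarith
    have hKt : (1 - t)⁻¹ < (K : ℝ) + 1 := by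
      have := (le_max_right (M : ℝ) (1 - t)⁻¹).trans_lt hK
      linarith
    have hinv : ((K : ℝ) + 1)⁻¹ < 1 - t := by
      rw [inv_lt_comm₀ (by positivity) h0t]
      exact hKt
    obtain hVK := (ha K).2
    simp only [hV, mem_iUnion] at hVK
    obtain ⟨x, hx, hgt⟩ := hVK
    have hxs : x ∈ s := hts ⟨by linarith [hx.1], hx.2⟩
    refine ⟨x, hxs, ?_⟩
    have hgt' : F x a < -(K : ℝ) := hgt
    have : F x a ≤ -(M : ℝ) := by linarith
    exact EReal.coe_le_coe_iff.2 this
  constructor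
  · rw [EReal.eq_top_iff_forall_lt]
    intro y
    obtain ⟨M, hM⟩ := exists_nat_gt y
    calc (y : EReal) < ((M : ℝ) : EReal) := EReal.coe_lt_coe_iff.2 hM
      _ ≤ _ := le_limsup_of_frequently_le' (hfreq M)
  · rw [EReal.eq_bot_iff_forall_lt]
    intro y
    obtain ⟨M, hM⟩ := exists_nat_gt (-y)
    calc liminf _ _ ≤ ((-(M : ℝ)) : EReal) := liminf_le_of_frequently_le' (hfreq' M)
      _ < (y : EReal) := EReal.coe_lt_coe_iff.2 (by linarith)
end

section
/- Let D be a finite set of real numbers with at least two elements such that Σ_{d∈D} d = 0, and give Ω = D^ℕ the product topology (D discrete). Then the set of sequences (aₙ) ∈ Ω such that for every real number y there are infinitely many x ∈ (0,1) with y = Σ_{n=1}^∞ aₙ xⁿ is residual (comeager) in Ω. -/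
open Filter Topology Set

namespace ResidualPS
variable {D : Finset ℝ}

noncomputable def f (a : ℕ → D) (x : ℝ) : ℝ := ∑' n : ℕ, (a n : ℝ) * x ^ (n + 1)

lemma summable_aux {C : ℝ} (hC : ∀ d : D, |(d : ℝ)| ≤ C) (a : ℕ → D) {x : ℝ}
    (hx : |x| < 1) : Summable (fun n : ℕ => (a n : ℝ) * x ^ (n + 1)) := by
  apply Summable.of_norm_bounded (g := fun n => (C * |x|) * |x| ^ n)
    ((summable_geometric_of_lt_one (abs_nonneg x) hx).mul_left _)
  intro n
  calc ‖(a n : ℝ) * x ^ (n + 1)‖ = |(a n : ℝ)| * |x| ^ (n + 1) := by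
        simp [Real.norm_eq_abs, abs_mul, abs_pow]
    _ ≤ C * |x| ^ (n + 1) :=
        mul_le_mul_of_nonneg_right (hC (a n)) (pow_nonneg (abs_nonneg x) _)
    _ = (C * |x|) * |x| ^ n := by ring

lemma tsum_tail_geom {x : ℝ} (h0 : 0 ≤ x) (h1 : x < 1) (c : ℝ) (N : ℕ) :
    ∑' i : ℕ, c * x ^ (i + N + 1) = c * x ^ (N + 1) / (1 - x) := by
  have h : ∀ i : ℕ, c * x ^ (i + N + 1) = (c * x ^ (N + 1)) * x ^ i := by
    intro i; ring
  rw [tsum_congr h, tsum_mul_left, tsum_geometric_of_lt_one h0 h1, div_eq_mul_inv]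

lemma summable_tail_geom {x : ℝ} (h0 : 0 ≤ x) (h1 : x < 1) (c : ℝ) (N : ℕ) :
    Summable (fun i : ℕ => c * x ^ (i + N + 1)) := by
  apply Summable.congr ((summable_geometric_of_lt_one h0 h1).mul_left (c * x ^ (N+1)))
  intro i; ring

lemma head_tail {C : ℝ} (hC : ∀ d : D, |(d : ℝ)| ≤ C) (a : ℕ → D) {x : ℝ}
    (h0 : 0 ≤ x) (h1 : x < 1) (N : ℕ) :
    f a x = (∑ i ∈ Finset.range N, (a i : ℝ) * x ^ (i + 1))
      + ∑' i : ℕ, (a (i + N) : ℝ) * x ^ (i + N + 1) := by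
  have hs := summable_aux hC a (by rwa [abs_of_nonneg h0])
  have h := Summable.sum_add_tsum_nat_add (f := fun n : ℕ => (a n : ℝ) * x ^ (n + 1)) N hs
  rw [f, ← h]

lemma tail_bound {C : ℝ} (hC : ∀ d : D, |(d : ℝ)| ≤ C) (a : ℕ → D) {x : ℝ}
    (h0 : 0 ≤ x) (h1 : x < 1) (N : ℕ) :
    |∑' i : ℕ, (a (i + N) : ℝ) * x ^ (i + N + 1)| ≤ C * x ^ (N + 1) / (1 - x) := by
  have hx : |x| < 1 := by rwa [abs_of_nonneg h0]
  have hs : Summable (fun i : ℕ => (a (i + N) : ℝ) * x ^ (i + N + 1)) :=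
    (summable_nat_add_iff (f := fun n : ℕ => (a n : ℝ) * x ^ (n + 1)) N).2 (summable_aux hC a hx)
  have hsg := summable_tail_geom h0 h1 C N
  have hb : ∀ i : ℕ, |(a (i + N) : ℝ) * x ^ (i + N + 1)| ≤ C * x ^ (i + N + 1) := by
    intro i
    rw [abs_mul, abs_pow, abs_of_nonneg h0]
    exact mul_le_mul_of_nonneg_right (hC _) (pow_nonneg h0 _)
  calc |∑' i : ℕ, (a (i + N) : ℝ) * x ^ (i + N + 1)|
      ≤ ∑' i : ℕ, |(a (i + N) : ℝ) * x ^ (i + N + 1)| := by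
        have h := norm_tsum_le_tsum_norm (f := fun i : ℕ => (a (i + N) : ℝ) * x ^ (i + N + 1))
          (by simpa only [Real.norm_eq_abs] using hs.abs)
        simpa only [Real.norm_eq_abs] using h
    _ ≤ ∑' i : ℕ, C * x ^ (i + N + 1) := Summable.tsum_le_tsum hb hs.abs hsg
    _ = C * x ^ (N + 1) / (1 - x) := tsum_tail_geom h0 h1 C N

lemma contOn {C : ℝ} (hC : ∀ d : D, |(d : ℝ)| ≤ C) (a : ℕ → D) {r : ℝ}
    (h0 : 0 ≤ r) (h1 : r < 1) : ContinuousOn (f a) (Icc 0 r) := by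
  have hC0 : 0 ≤ C := le_trans (abs_nonneg _) (hC (a 0))
  apply continuousOn_tsum (u := fun n : ℕ => (C * r) * r ^ n)
  · intro i; exact (continuous_const.mul (continuous_pow _)).continuousOn
  · exact (summable_geometric_of_lt_one h0 h1).mul_left _
  · intro n x hx
    have hx0 : 0 ≤ x := hx.1
    have hxr : x ≤ r := hx.2
    calc ‖(a n : ℝ) * x ^ (n + 1)‖ = |(a n : ℝ)| * x ^ (n + 1) := by
          simp [Real.norm_eq_abs, abs_mul, abs_pow, abs_of_nonneg hx0]
      _ ≤ C * r ^ (n + 1) :=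
          mul_le_mul (hC _) (pow_le_pow_left₀ hx0 hxr _) (pow_nonneg hx0 _) hC0
      _ = (C * r) * r ^ n := by ring

lemma isOpen_U {C : ℝ} (hC : ∀ d : D, |(d : ℝ)| ≤ C) (hC0 : 0 < C) (s M l : ℝ)
    (hs : |s| = 1) :
    IsOpen {a : ℕ → D | ∃ x, l < x ∧ 0 < x ∧ x < 1 ∧ M < s * f a x} := by
  rw [isOpen_iff_mem_nhds]
  rintro a ⟨x, hlx, hx0, hx1, hMf⟩
  have hx1' : 0 < 1 - x := by linarith
  set ε : ℝ := s * f a x - M with hεdef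
  have hε0 : 0 < ε := by simp [hεdef]; linarith
  obtain ⟨N, hN⟩ : ∃ N : ℕ, 2 * C * x ^ (N + 1) / (1 - x) < ε := by
    obtain ⟨n, hn⟩ := exists_pow_lt_of_lt_one
      (show (0:ℝ) < ε * (1 - x) / (2 * C) by positivity) hx1
    refine ⟨n, ?_⟩
    have hxn : x ^ (n + 1) ≤ x ^ n := pow_le_pow_of_le_one hx0.le hx1.le (Nat.le_succ n)
    rw [div_lt_iff₀ hx1']
    rw [lt_div_iff₀ (by positivity : (0:ℝ) < 2 * C)] at hn
    nlinarith [pow_nonneg hx0.le n]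
  refine mem_of_superset ?_ ?_ (x := (Finset.range N : Set ℕ).pi (fun i => ({a i} : Set D)))
  · exact (isOpen_set_pi (Finset.range N).finite_toSet
      (fun i _ => isOpen_discrete _)).mem_nhds (by intro i _; rfl)
  · rintro b hb
    have hhead : (∑ i ∈ Finset.range N, (b i : ℝ) * x ^ (i + 1))
        = ∑ i ∈ Finset.range N, (a i : ℝ) * x ^ (i + 1) := by
      refine Finset.sum_congr rfl fun i hi => ?_
      rw [hb i hi]
    have hdiff : |f b x - f a x| ≤ 2 * C * x ^ (N + 1) / (1 - x) := by
      rw [head_tail hC b hx0.le hx1 N, head_tail hC a hx0.le hx1 N, hhead]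
      have h1 := tail_bound hC b hx0.le hx1 N
      have h2 := tail_bound hC a hx0.le hx1 N
      calc |(∑ i ∈ Finset.range N, (a i : ℝ) * x ^ (i + 1)
            + ∑' i : ℕ, (b (i + N) : ℝ) * x ^ (i + N + 1))
          - (∑ i ∈ Finset.range N, (a i : ℝ) * x ^ (i + 1)
            + ∑' i : ℕ, (a (i + N) : ℝ) * x ^ (i + N + 1))|
          = |(∑' i : ℕ, (b (i + N) : ℝ) * x ^ (i + N + 1))
            - ∑' i : ℕ, (a (i + N) : ℝ) * x ^ (i + N + 1)| := by congr 1; ring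
        _ ≤ |∑' i : ℕ, (b (i + N) : ℝ) * x ^ (i + N + 1)|
            + |∑' i : ℕ, (a (i + N) : ℝ) * x ^ (i + N + 1)| := abs_sub _ _
        _ ≤ 2 * C * x ^ (N + 1) / (1 - x) := by
            have : 2 * C * x ^ (N + 1) / (1 - x)
                = C * x ^ (N + 1) / (1 - x) + C * x ^ (N + 1) / (1 - x) := by ring
            rw [this]; exact add_le_add h1 h2
    refine ⟨x, hlx, hx0, hx1, ?_⟩
    have h3 : |s * (f b x - f a x)| ≤ 2 * C * x ^ (N + 1) / (1 - x) := by
      rw [abs_mul, hs, one_mul]; exact hdiff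
    have h4 := neg_abs_le (s * (f b x - f a x))
    have h5 : s * f b x = s * f a x + s * (f b x - f a x) := by ring
    rw [h5]
    have := h3.trans_lt hN
    linarith [h4, this]

lemma dense_U {C : ℝ} (hC : ∀ d : D, |(d : ℝ)| ≤ C) (hC0 : 0 < C) (s : ℝ) (e : D)
    (he : 0 < s * (e : ℝ)) (hs : |s| = 1) (M l : ℝ) (hl : l < 1) :
    Dense {a : ℕ → D | ∃ x, l < x ∧ 0 < x ∧ x < 1 ∧ M < s * f a x} := by
  rw [dense_iff_inter_open]
  rintro O hO ⟨a, ha⟩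
  obtain ⟨I, u, hu, hsub⟩ := isOpen_pi_iff.1 hO a ha
  set N : ℕ := I.sup id + 1 with hNdef
  have hIN : ∀ i ∈ I, i < N := fun i hi => Nat.lt_succ_of_le (Finset.le_sup (f := id) hi)
  set b : ℕ → D := fun n => if n < N then a n else e with hbdef
  have hbO : b ∈ O := by
    apply hsub
    intro i hi
    have : b i = a i := if_pos (hIN i hi)
    rw [this]
    exact (hu i hi).2
  -- now find the witness x
  set x₀ : ℝ := max l 0 with hx₀def
  have hx₀1 : x₀ < 1 := max_lt hl one_pos
  have hx₀0 : 0 ≤ x₀ := le_max_right _ _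
  set c : ℝ := ((x₀ + 1) / 2) ^ (N + 1) with hcdef
  have hc0 : 0 < c := pow_pos (by linarith) _
  set A : ℝ := |M| + C * N + 1 with hAdef
  have hA0 : 0 < A := by positivity
  set ε : ℝ := s * (e : ℝ) * c / A with hεdef
  have hε0 : 0 < ε := by positivity
  set x : ℝ := max ((x₀ + 1) / 2) (1 - ε / 2) with hxdef
  have hx1 : x < 1 := max_lt (by linarith) (by linarith)
  have hxh : (x₀ + 1) / 2 ≤ x := le_max_left _ _
  have hx0 : 0 < x := lt_of_lt_of_le (by linarith) hxh
  have hlx : l < x := lt_of_le_of_lt (le_max_left l 0) (lt_of_lt_of_le (by linarith) hxh)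
  have h1x : 0 < 1 - x := by linarith
  have h1xε : 1 - x ≤ ε / 2 := by
    have := le_max_right ((x₀ + 1) / 2) (1 - ε / 2)
    linarith
  -- compute f b x
  have htail : ∀ i : ℕ, (b (i + N) : ℝ) * x ^ (i + N + 1) = (e : ℝ) * x ^ (i + N + 1) := by
    intro i
    have : b (i + N) = e := if_neg (by omega)
    rw [this]
  have hfb : f b x = (∑ i ∈ Finset.range N, (b i : ℝ) * x ^ (i + 1))
      + (e : ℝ) * x ^ (N + 1) / (1 - x) := by
    rw [head_tail hC b hx0.le hx1 N, tsum_congr htail, tsum_tail_geom hx0.le hx1]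
  have hhead : |∑ i ∈ Finset.range N, (b i : ℝ) * x ^ (i + 1)| ≤ C * N := by
    calc |∑ i ∈ Finset.range N, (b i : ℝ) * x ^ (i + 1)|
        ≤ ∑ i ∈ Finset.range N, |(b i : ℝ) * x ^ (i + 1)| := Finset.abs_sum_le_sum_abs _ _
      _ ≤ ∑ _i ∈ Finset.range N, C := by
          refine Finset.sum_le_sum fun i _ => ?_
          rw [abs_mul, abs_pow, abs_of_nonneg hx0.le]
          calc |(b i : ℝ)| * x ^ (i + 1) ≤ C * 1 := by
                refine mul_le_mul (hC _) (pow_le_one₀ hx0.le hx1.le) (by positivity)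
                  hC0.le
            _ = C := mul_one C
      _ = C * N := by simp [mul_comm]
  -- tail lower bound
  have hxc : c ≤ x ^ (N + 1) := pow_le_pow_left₀ (by linarith) hxh _
  have htail_lb : 2 * A ≤ s * ((e : ℝ) * x ^ (N + 1) / (1 - x)) := by
    have h5 : (s * (e : ℝ) * c) / (ε / 2) ≤ (s * (e : ℝ) * x ^ (N + 1)) / (1 - x) :=
      div_le_div₀ (by positivity)
        (mul_le_mul_of_nonneg_left hxc he.le) h1x h1xε
    have h6 : (s * (e : ℝ) * c) / (ε / 2) = 2 * A := by
      rw [hεdef]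
      field_simp
      exact div_self he.ne'
    have h7 : s * ((e : ℝ) * x ^ (N + 1) / (1 - x))
        = (s * (e : ℝ) * x ^ (N + 1)) / (1 - x) := by ring
    rw [h7]
    linarith
  refine ⟨b, hbO, ⟨x, hlx, hx0, hx1, ?_⟩⟩
  rw [hfb, mul_add]
  have h7 := neg_abs_le (s * ∑ i ∈ Finset.range N, (b i : ℝ) * x ^ (i + 1))
  have h8 : |s * ∑ i ∈ Finset.range N, (b i : ℝ) * x ^ (i + 1)| ≤ 1 * (C * N) := by
    rw [abs_mul]
    exact mul_le_mul hs.le hhead (abs_nonneg _) one_pos.le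
  have h9 := le_abs_self M
  nlinarith [h7, h8, htail_lb, h9]

end ResidualPS

open ResidualPS

/-- **Corollary (categorial part).** If the finite set `D` has at least two elements and its
elements sum to zero, then the set of sequences `(aₙ) ∈ D^ℕ` (product topology, `D` discrete)
such that for every real `y` there are infinitely many `x ∈ (0,1)` with `y = ∑ aₙ xⁿ`
is residual. -/
theorem residual_power_series_hits_every_value
    (D : Finset ℝ) (hD : 2 ≤ D.card) (hsum : ∑ d ∈ D, d = 0) :
    {a : ℕ → D | ∀ y : ℝ,
      {x : ℝ | x ∈ Set.Ioo (0 : ℝ) 1 ∧ y = ∑' n : ℕ, (a n : ℝ) * x ^ (n + 1)}.Infinite}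
      ∈ residual (ℕ → D) := by
  classical
  have hcard : ∀ (c : ℝ), ¬ (D ⊆ {c}) := by
    intro c hc
    have := Finset.card_le_card hc
    simp [Finset.card_singleton] at this
    omega
  have hpos : ∃ p ∈ D, (0:ℝ) < p := by
    by_contra h
    push_neg at h
    have hz := (Finset.sum_eq_zero_iff_of_nonpos (fun i hi => h i hi)).1 hsum
    exact hcard 0 (fun d hd => Finset.mem_singleton.2 (hz d hd))
  have hneg : ∃ q ∈ D, q < (0:ℝ) := by
    by_contra h
    push_neg at h
    have hz := (Finset.sum_eq_zero_iff_of_nonneg (fun i hi => h i hi)).1 hsum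
    exact hcard 0 (fun d hd => Finset.mem_singleton.2 (hz d hd))
  obtain ⟨p, hpD, hp⟩ := hpos
  obtain ⟨q, hqD, hq⟩ := hneg
  have hne : D.Nonempty := ⟨p, hpD⟩
  set C : ℝ := D.sup' hne (fun d => |d|) with hCdef
  have hC : ∀ d : D, |(d : ℝ)| ≤ C := fun d => Finset.le_sup' (fun d => |d|) d.2
  have hC0 : 0 < C := lt_of_lt_of_le hp ((le_abs_self p).trans (hC ⟨p, hpD⟩))
  set l : ℕ → ℝ := fun m => 1 - 1 / (m + 1) with hldef
  have hl1 : ∀ m : ℕ, l m < 1 := by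
    intro m
    have h : (0:ℝ) < 1/((m:ℝ)+1) := by positivity
    simp only [hldef]
    linarith
  set U : ℝ → ℕ → ℕ → Set (ℕ → D) := fun s M m =>
    {a : ℕ → D | ∃ x, l m < x ∧ 0 < x ∧ x < 1 ∧ (M:ℝ) < s * ResidualPS.f a x} with hUdef
  have hmem : ∀ (M m : ℕ), U 1 M m ∩ U (-1) M m ∈ residual (ℕ → D) := by
    intro M m
    refine inter_mem ?_ ?_
    · exact residual_of_dense_open (isOpen_U hC hC0 1 M (l m) (by norm_num))
        (dense_U hC hC0 1 ⟨p, hpD⟩ (show (0:ℝ) < 1 * p by linarith) (by norm_num)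
          M (l m) (hl1 m))
    · exact residual_of_dense_open (isOpen_U hC hC0 (-1) M (l m) (by norm_num))
        (dense_U hC hC0 (-1) ⟨q, hqD⟩ (show (0:ℝ) < -1 * q by linarith) (by norm_num)
          M (l m) (hl1 m))
  refine mem_of_superset
    ((countable_iInter_mem).2 fun M : ℕ => (countable_iInter_mem).2 fun m : ℕ => hmem M m) ?_
  rintro a ha
  simp only [mem_iInter] at ha
  intro y
  have claim : ∀ t : ℝ, t < 1 →
      ∃ x, (x ∈ Set.Ioo (0:ℝ) 1 ∧ y = ∑' n : ℕ, (a n : ℝ) * x ^ (n + 1)) ∧ t < x := by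
    intro t ht
    obtain ⟨m, hm⟩ := exists_nat_one_div_lt (show (0:ℝ) < 1 - t by linarith)
    have hlm : t < l m := by simp only [hldef]; linarith
    obtain ⟨M, hM⟩ := exists_nat_gt |y|
    obtain ⟨x₁, hx₁l, hx₁0, hx₁1, hfx₁⟩ := (ha M m).1
    obtain ⟨x₂, hx₂l, hx₂0, hx₂1, hfx₂⟩ := (ha M m).2
    rw [one_mul] at hfx₁
    have hfx₂' : f a x₂ < -(M:ℝ) := by linarith
    have hy1 : y < f a x₁ := lt_of_le_of_lt (le_abs_self y) (lt_trans hM hfx₁)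
    have hy2 : f a x₂ < y := lt_of_lt_of_le hfx₂' (by linarith [neg_abs_le y])
    have hr1 : max x₁ x₂ < 1 := max_lt hx₁1 hx₂1
    have hr0 : (0:ℝ) ≤ max x₁ x₂ := hx₁0.le.trans (le_max_left _ _)
    have hcont : ContinuousOn (f a) (uIcc x₁ x₂) := by
      apply (contOn hC a hr0 hr1).mono
      intro z hz
      rcases Set.mem_uIcc.1 hz with ⟨h1, h2⟩ | ⟨h1, h2⟩
      · exact ⟨hx₁0.le.trans h1, h2.trans (le_max_right _ _)⟩
      · exact ⟨hx₂0.le.trans h1, h2.trans (le_max_left _ _)⟩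
    have hyin : y ∈ uIcc (f a x₁) (f a x₂) := Set.mem_uIcc.2 (Or.inr ⟨hy2.le, hy1.le⟩)
    obtain ⟨x, hxI, hfx⟩ := intermediate_value_uIcc hcont hyin
    have hxb : l m < x ∧ 0 < x ∧ x < 1 := by
      rcases Set.mem_uIcc.1 hxI with ⟨h1, h2⟩ | ⟨h1, h2⟩
      · exact ⟨lt_of_lt_of_le hx₁l h1, lt_of_lt_of_le hx₁0 h1, lt_of_le_of_lt h2 hx₂1⟩
      · exact ⟨lt_of_lt_of_le hx₂l h1, lt_of_lt_of_le hx₂0 h1, lt_of_le_of_lt h2 hx₁1⟩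
    exact ⟨x, ⟨⟨hxb.2.1, hxb.2.2⟩, hfx.symm⟩, lt_trans hlm hxb.1⟩
  by_contra hfin'
  rw [Set.not_infinite] at hfin'
  have hSne : {x : ℝ | x ∈ Set.Ioo (0:ℝ) 1 ∧
      y = ∑' n : ℕ, (a n : ℝ) * x ^ (n + 1)}.Nonempty := by
    obtain ⟨x, hx, _⟩ := claim 0 one_pos
    exact ⟨x, hx⟩
  have hsup := hSne.csSup_mem hfin'
  obtain ⟨x, hxS, hxgt⟩ := claim _ hsup.1.2
  exact absurd (le_csSup hfin'.bddAbove hxS) (not_le.2 hxgt)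
end

section
/- Let D = {d₁, …, d_k} be a finite set of k ≥ 2 distinct real numbers. For every ε > 0 there exists N₀ ∈ ℕ such that for all N ≥ N₀ there exist a subset S ⊆ D^N with #S ≥ (1 − ε)·k^N and an injective map g : S → D^N such that for every (a₁, …, a_N) ∈ S, writing g((a₁, …, a_N)) = (b₁, …, b_N), one has Σ_{n=1}^N bₙ = (d₂ − d₁) + Σ_{n=1}^N aₙ. -/
open Finset

/-- `(2n+1) * C(2n,n)^2 ≤ 16^n`. -/
lemma cb_sq_bound : ∀ n : ℕ, (2*n+1) * (Nat.centralBinom n)^2 ≤ 16^n := by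
  intro n
  induction n with
  | zero => simp [Nat.centralBinom]
  | succ n ih =>
    have key : (n+1) * Nat.centralBinom (n+1) = 2 * (2*n+1) * Nat.centralBinom n :=
      Nat.succ_mul_centralBinom_succ n
    have hpos : 0 < (n+1)^2 := by positivity
    refine Nat.le_of_mul_le_mul_left ?_ hpos
    have hc : (2*n+3) * (2*n+1) * 4 ≤ (n+1)^2 * 16 := by nlinarith
    calc (n+1)^2 * ((2*(n+1)+1) * Nat.centralBinom (n+1)^2)
        = (2*(n+1)+1) * ((n+1) * Nat.centralBinom (n+1))^2 := by ring
      _ = (2*(n+1)+1) * (2 * (2*n+1) * Nat.centralBinom n)^2 := by rw [key]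
      _ = (2*n+3) * (2*n+1) * 4 * ((2*n+1) * Nat.centralBinom n^2) := by ring
      _ ≤ (2*n+3) * (2*n+1) * 4 * 16^n := Nat.mul_le_mul_left _ ih
      _ ≤ (n+1)^2 * 16 * 16^n := Nat.mul_le_mul_right _ hc
      _ = (n+1)^2 * 16^(n+1) := by ring

/-- `(t+1) * C(t, ⌊t/2⌋)^2 ≤ 4^t`. -/
lemma middle_sq_bound (t : ℕ) : (t+1) * (t.choose (t/2))^2 ≤ 4^t := by
  rcases Nat.even_or_odd t with ⟨n, hn⟩ | ⟨n, hn⟩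
  · subst hn
    have h : (n+n)/2 = n := by omega
    rw [h]
    have := cb_sq_bound n
    have h16 : (16:ℕ)^n = 4^(n+n) := by rw [show n+n = 2*n by ring, pow_mul]; norm_num
    calc (n+n+1) * ((n+n).choose n)^2 = (2*n+1) * (Nat.centralBinom n)^2 := by
          rw [Nat.centralBinom]; ring_nf
      _ ≤ 16^n := this
      _ = 4^(n+n) := h16
  · subst hn
    have h : (2*n+1)/2 = n := by omega
    rw [h]
    -- 2 * C(2n+1, n) = centralBinom (n+1)
    have hdouble : 2 * (2*n+1).choose n = Nat.centralBinom (n+1) := by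
      rw [Nat.centralBinom]
      have : 2*(n+1) = (2*n+1) + 1 := by ring
      rw [this, Nat.choose_succ_succ' (2*n+1) n]
      have hsymm : (2*n+1).choose (n+1) = (2*n+1).choose n := by
        have := Nat.choose_symm (show n+1 ≤ 2*n+1 by omega) (n := 2*n+1)
        simpa [show 2*n+1-(n+1) = n by omega] using this.symm
      omega
    have hcb := cb_sq_bound (n+1)
    have : (2*(n+1)+1) * ((2 * (2*n+1).choose n))^2 ≤ 16^(n+1) := by rw [hdouble]; exact hcb
    have h4 : (4:ℕ) * ((2*n+1+1) * ((2*n+1).choose n)^2) ≤ 16^(n+1)  := by nlinarith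
    have h16 : (16:ℕ)^(n+1) = 4 * 4^(2*n+1) := by
      have e1 : (16:ℕ)^(n+1) = 4^(2*(n+1)) := by rw [pow_mul]; norm_num
      rw [e1, show 2*(n+1) = (2*n+1)+1 by ring, pow_succ, mul_comm]
    rw [h16] at h4
    exact Nat.le_of_mul_le_mul_left h4 (by norm_num)

lemma choose_mono_lower {t m : ℕ} (hm : 1 ≤ m) (h : 2*m ≤ t) :
    t.choose (m-1) ≤ t.choose m := by
  obtain ⟨j, rfl⟩ : ∃ j, m = j + 1 := ⟨m-1, by omega⟩
  simp only [Nat.add_sub_cancel]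
  have key := Nat.choose_succ_right_eq t j
  have h1 : t.choose j * (j+1) ≤ t.choose j * (t - j) :=
    Nat.mul_le_mul_left _ (by omega)
  rw [← key] at h1
  exact Nat.le_of_mul_le_mul_right h1 (by omega)

lemma choose_anti_upper {t m : ℕ} (hm : 1 ≤ m) (h : t < 2*m) :
    t.choose m ≤ t.choose (m-1) := by
  obtain ⟨j, rfl⟩ : ∃ j, m = j + 1 := ⟨m-1, by omega⟩
  simp only [Nat.add_sub_cancel]
  have key := Nat.choose_succ_right_eq t j
  have h1 : t.choose (j+1) * (j+1) ≤ t.choose j * (j+1) := by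
    rw [key]; exact Nat.mul_le_mul_left _ (by omega)
  exact Nat.le_of_mul_le_mul_right h1 (by omega)

lemma telescope_sum : ∀ (n : ℕ) (f : ℕ → ℕ) (j : ℕ), j ≤ n →
    (∀ i, i+1 ≤ j → f i ≤ f (i+1)) →
    (∑ i ∈ range n, (if i+1 ≤ j then f (i+1) - f i else 0)) = f j - f 0 := by
  intro n
  induction n with
  | zero => intro f j hj _; interval_cases j; simp
  | succ n ih =>
    intro f j hj hf
    rw [Finset.sum_range_succ]
    rcases Nat.lt_or_ge j (n+1) with h | h
    · rw [ih f j (by omega) hf, if_neg (by omega)]; omega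
    · have hj' : j = n+1 := by omega
      subst hj'
      rw [if_pos (by omega)]
      have e1 : (∑ i ∈ range n, (if i+1 ≤ n+1 then f (i+1) - f i else 0))
          = ∑ i ∈ range n, (if i+1 ≤ n then f (i+1) - f i else 0) := by
        apply Finset.sum_congr rfl
        intro i hi
        simp only [mem_range] at hi
        rw [if_pos (by omega), if_pos (by omega)]
      rw [e1, ih f n le_rfl (fun i hi => hf i (by omega))]
      have mono0 : ∀ i, i ≤ n → f 0 ≤ f i := by
        intro i
        induction i with
        | zero => intro; exact le_rfl
        | succ i ihh => intro hi; exact le_trans (ihh (by omega)) (hf i (by omega))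
      have h1 := mono0 n le_rfl
      have h2 := hf n le_rfl
      omega

section InjHelper
variable {γ : Type*} [DecidableEq γ]

lemma exists_injOn_of_card_le (s t : Finset γ) (h : s.card ≤ t.card) :
    ∃ f : γ → γ, Set.InjOn f ↑s ∧ ∀ x ∈ s, f x ∈ t := by
  have : Fintype.card ↥s ≤ Fintype.card ↥t := by
    simpa [Fintype.card_coe] using h
  obtain ⟨e⟩ := Function.Embedding.nonempty_of_card_le this
  classical
  refine ⟨fun x => if hx : x ∈ s then ↑(e ⟨x, hx⟩) else x, ?_, ?_⟩
  · intro x hx y hy hxy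
    simp only [Finset.mem_coe] at hx hy
    simp only [dif_pos hx, dif_pos hy] at hxy
    have := e.injective (Subtype.ext hxy)
    exact congrArg Subtype.val this
  · intro x hx
    simp only [dif_pos hx]
    exact (e ⟨x, hx⟩).2

noncomputable def chooseInj (s t : Finset γ) : γ → γ :=
  if h : s.card ≤ t.card then (exists_injOn_of_card_le s t h).choose else id

lemma chooseInj_spec (s t : Finset γ) (h : s.card ≤ t.card) :
    Set.InjOn (chooseInj s t) ↑s ∧ ∀ x ∈ s, chooseInj s t x ∈ t := by
  rw [chooseInj, dif_pos h]
  exact (exists_injOn_of_card_le s t h).choose_spec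

end InjHelper

section Core

variable (D : Finset ℝ) (d₁ d₂ : ℝ) (h₁ : d₁ ∈ D) (h₂ : d₂ ∈ D) (N : ℕ)

def Dv₁ : ↥D := ⟨d₁, h₁⟩
def Dv₂ : ↥D := ⟨d₂, h₂⟩

variable {D d₁ d₂}

noncomputable def Aset (a : Fin N → ↥D) : Finset (Fin N) := univ.filter (fun i => a i = Dv₁ D d₁ h₁)

noncomputable def Bset (a : Fin N → ↥D) : Finset (Fin N) := univ.filter (fun i => a i = Dv₂ D d₂ h₂)

noncomputable def kap (a : Fin N → ↥D) : Fin N → ↥D :=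
  fun i => if a i = Dv₁ D d₁ h₁ then Dv₂ D d₂ h₂ else a i

noncomputable def rho (b : Fin N → ↥D) (E : Finset (Fin N)) : Fin N → ↥D :=
  fun i => if i ∈ E then Dv₁ D d₁ h₁ else b i

noncomputable def Fib (b : Fin N → ↥D) (m : ℕ) : Finset (Fin N → ↥D) :=
  univ.filter (fun x => kap h₁ h₂ N x = b ∧ (Aset h₁ N x).card = m)

noncomputable def noD1 : Finset (Fin N → ↥D) := univ.filter (fun b => ∀ i, b i ≠ Dv₁ D d₁ h₁)

lemma mem_Fib {b x : Fin N → ↥D} {m : ℕ} :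
    x ∈ Fib h₁ h₂ N b m ↔ kap h₁ h₂ N x = b ∧ (Aset h₁ N x).card = m := by
  simp [Fib]

lemma mem_Aset {a : Fin N → ↥D} {i : Fin N} : i ∈ Aset h₁ N a ↔ a i = Dv₁ D d₁ h₁ := by
  simp [Aset]

lemma mem_Bset {a : Fin N → ↥D} {i : Fin N} : i ∈ Bset h₂ N a ↔ a i = Dv₂ D d₂ h₂ := by
  simp [Bset]

lemma hv_ne (hne : d₁ ≠ d₂) : Dv₁ D d₁ h₁ ≠ Dv₂ D d₂ h₂ := by
  simp [Dv₁, Dv₂, Subtype.ext_iff, hne]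

lemma kap_ne (hne : d₁ ≠ d₂) (a : Fin N → ↥D) (i : Fin N) :
    kap h₁ h₂ N a i ≠ Dv₁ D d₁ h₁ := by
  rw [kap]
  split
  · exact fun h => (hv_ne h₁ h₂ hne) h.symm
  · assumption

lemma kap_mem_noD1 (hne : d₁ ≠ d₂) (a : Fin N → ↥D) :
    kap h₁ h₂ N a ∈ noD1 h₁ N := by
  simp only [noD1, mem_filter, mem_univ, true_and]
  exact kap_ne h₁ h₂ N hne a

lemma Aset_subset_Bset {x b : Fin N → ↥D} (hx : kap h₁ h₂ N x = b) :
    Aset h₁ N x ⊆ Bset h₂ N b := by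
  intro i hi
  rw [mem_Aset] at hi
  rw [mem_Bset, ← hx, kap, if_pos hi]

lemma rho_kap {b : Fin N → ↥D} (hb : ∀ i, b i ≠ Dv₁ D d₁ h₁) {E : Finset (Fin N)}
    (hE : E ⊆ Bset h₂ N b) : kap h₁ h₂ N (rho h₁ N b E) = b := by
  funext i
  rw [kap, rho]
  by_cases hi : i ∈ E
  · rw [if_pos hi, if_pos rfl]
    exact ((mem_Bset h₂ N).mp (hE hi)).symm
  · rw [if_neg hi, if_neg (hb i)]

lemma rho_Aset {b : Fin N → ↥D} (hb : ∀ i, b i ≠ Dv₁ D d₁ h₁) (E : Finset (Fin N)) :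
    Aset h₁ N (rho h₁ N b E) = E := by
  ext i
  rw [mem_Aset, rho]
  by_cases hi : i ∈ E
  · simp [hi]
  · simp [hi, hb i]

lemma rho_kap_inv {x b : Fin N → ↥D} (hx : kap h₁ h₂ N x = b) :
    rho h₁ N b (Aset h₁ N x) = x := by
  funext i
  rw [rho]
  by_cases hi : i ∈ Aset h₁ N x
  · rw [if_pos hi]; exact ((mem_Aset h₁ N).mp hi).symm
  · rw [if_neg hi, ← hx, kap, if_neg]
    exact fun h => hi ((mem_Aset h₁ N).mpr h)

lemma Fib_card {b : Fin N → ↥D} (hb : ∀ i, b i ≠ Dv₁ D d₁ h₁) (m : ℕ) :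
    (Fib h₁ h₂ N b m).card = ((Bset h₂ N b).card).choose m := by
  rw [← Finset.card_powersetCard]
  apply Finset.card_nbij' (Aset h₁ N) (rho h₁ N b)
  · intro a ha
    rw [Finset.mem_coe, mem_Fib] at ha
    rw [Finset.mem_coe, Finset.mem_powersetCard]
    exact ⟨Aset_subset_Bset h₁ h₂ N ha.1, ha.2⟩
  · intro E hE
    rw [Finset.mem_coe, Finset.mem_powersetCard] at hE
    rw [Finset.mem_coe, mem_Fib]
    exact ⟨rho_kap h₁ h₂ N hb hE.1, by rw [rho_Aset h₁ N hb]; exact hE.2⟩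
  · intro a ha
    rw [Finset.mem_coe, mem_Fib] at ha
    exact rho_kap_inv h₁ h₂ N ha.1
  · intro E hE
    exact rho_Aset h₁ N hb E

lemma fiber_card {b : Fin N → ↥D} (hb : ∀ i, b i ≠ Dv₁ D d₁ h₁) :
    (univ.filter (fun x => kap h₁ h₂ N x = b)).card = 2 ^ (Bset h₂ N b).card := by
  rw [← Finset.card_powerset]
  apply Finset.card_nbij' (Aset h₁ N) (rho h₁ N b)
  · intro a ha
    simp only [Finset.mem_coe, mem_filter, mem_univ, true_and] at ha
    rw [Finset.mem_coe, Finset.mem_powerset]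
    exact Aset_subset_Bset h₁ h₂ N ha
  · intro E hE
    rw [Finset.mem_coe, Finset.mem_powerset] at hE
    simp only [Finset.mem_coe, mem_filter, mem_univ, true_and]
    exact rho_kap h₁ h₂ N hb hE
  · intro a ha
    simp only [Finset.mem_coe, mem_filter, mem_univ, true_and] at ha
    exact rho_kap_inv h₁ h₂ N ha
  · intro E hE
    exact rho_Aset h₁ N hb E


noncomputable def sel (b : Fin N → ↥D) (m : ℕ) : Finset (Fin N → ↥D) :=
  if h : 2*m ≤ (Bset h₂ N b).card ∧
      ((Bset h₂ N b).card).choose (m-1) ≤ (Fib h₁ h₂ N b m).card then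
    (Finset.exists_subset_card_eq h.2).choose
  else Fib h₁ h₂ N b m

lemma sel_subset (b : Fin N → ↥D) (m : ℕ) : sel h₁ h₂ N b m ⊆ Fib h₁ h₂ N b m := by
  rw [sel]
  split
  · next h => exact (Finset.exists_subset_card_eq h.2).choose_spec.1
  · exact Finset.Subset.refl _

lemma sel_card {b : Fin N → ↥D} (hb : ∀ i, b i ≠ Dv₁ D d₁ h₁) {m : ℕ} (hm : 1 ≤ m) :
    (sel h₁ h₂ N b m).card =
      if 2*m ≤ (Bset h₂ N b).card then ((Bset h₂ N b).card).choose (m-1)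
      else ((Bset h₂ N b).card).choose m := by
  rw [sel]
  by_cases h2m : 2*m ≤ (Bset h₂ N b).card
  · have hcard : ((Bset h₂ N b).card).choose (m-1) ≤ (Fib h₁ h₂ N b m).card := by
      rw [Fib_card h₁ h₂ N hb]
      exact choose_mono_lower hm h2m
    rw [dif_pos ⟨h2m, hcard⟩, if_pos h2m]
    exact (Finset.exists_subset_card_eq hcard).choose_spec.2
  · rw [if_neg h2m]
    have : ¬ (2*m ≤ (Bset h₂ N b).card ∧
        ((Bset h₂ N b).card).choose (m-1) ≤ (Fib h₁ h₂ N b m).card) := fun h => h2m h.1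
    rw [dif_neg this]
    exact Fib_card h₁ h₂ N hb m

lemma sel_card_le {b : Fin N → ↥D} (hb : ∀ i, b i ≠ Dv₁ D d₁ h₁) {m : ℕ} (hm : 1 ≤ m) :
    (sel h₁ h₂ N b m).card ≤ (Fib h₁ h₂ N b (m-1)).card := by
  rw [sel_card h₁ h₂ N hb hm, Fib_card h₁ h₂ N hb]
  split
  · exact le_rfl
  · next h => exact choose_anti_upper hm (by omega)

noncomputable def gmap (a : Fin N → ↥D) : Fin N → ↥D :=
  chooseInj (sel h₁ h₂ N (kap h₁ h₂ N a) ((Aset h₁ N a).card))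
    (Fib h₁ h₂ N (kap h₁ h₂ N a) ((Aset h₁ N a).card - 1)) a

noncomputable def Sgood : Finset (Fin N → ↥D) :=
  univ.filter (fun a => 1 ≤ (Aset h₁ N a).card ∧
    a ∈ sel h₁ h₂ N (kap h₁ h₂ N a) ((Aset h₁ N a).card))

lemma mem_Sgood {a : Fin N → ↥D} :
    a ∈ Sgood h₁ h₂ N ↔ 1 ≤ (Aset h₁ N a).card ∧
      a ∈ sel h₁ h₂ N (kap h₁ h₂ N a) ((Aset h₁ N a).card) := by
  simp [Sgood]

lemma gmap_mem (hne : d₁ ≠ d₂) {a : Fin N → ↥D} (ha : a ∈ Sgood h₁ h₂ N) :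
    gmap h₁ h₂ N a ∈ Fib h₁ h₂ N (kap h₁ h₂ N a) ((Aset h₁ N a).card - 1) := by
  rw [mem_Sgood] at ha
  have hb : ∀ i, kap h₁ h₂ N a i ≠ Dv₁ D d₁ h₁ := kap_ne h₁ h₂ N hne a
  exact (chooseInj_spec _ _ (sel_card_le h₁ h₂ N hb ha.1)).2 a ha.2

lemma gmap_injOn (hne : d₁ ≠ d₂) : Set.InjOn (gmap h₁ h₂ N) ↑(Sgood h₁ h₂ N) := by
  intro a ha a' ha' hg
  simp only [Finset.mem_coe] at ha ha'
  have hma := gmap_mem h₁ h₂ N hne ha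
  have hma' := gmap_mem h₁ h₂ N hne ha'
  rw [mem_Fib] at hma hma'
  rw [mem_Sgood] at ha ha'
  have hk : kap h₁ h₂ N a = kap h₁ h₂ N a' := by
    rw [← hma.1, ← hma'.1, hg]
  have hl : (Aset h₁ N a).card = (Aset h₁ N a').card := by
    have : (Aset h₁ N a).card - 1 = (Aset h₁ N a').card - 1 := by
      rw [← hma.2, ← hma'.2, hg]
    omega
  have hb : ∀ i, kap h₁ h₂ N a i ≠ Dv₁ D d₁ h₁ := kap_ne h₁ h₂ N hne a
  have hinj := (chooseInj_spec
    (sel h₁ h₂ N (kap h₁ h₂ N a) ((Aset h₁ N a).card))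
    (Fib h₁ h₂ N (kap h₁ h₂ N a) ((Aset h₁ N a).card - 1))
    (sel_card_le h₁ h₂ N hb ha.1)).1
  apply hinj
  · exact Finset.mem_coe.mpr ha.2
  · rw [Finset.mem_coe, hk, hl]; exact ha'.2
  · rw [gmap] at hg
    rw [hg, gmap, hk, hl]


lemma sum_eq_kap (x : Fin N → ↥D) :
    ∑ n : Fin N, ((x n : ℝ)) =
      (∑ n : Fin N, ((kap h₁ h₂ N x n : ℝ))) + ((Aset h₁ N x).card : ℝ) * (d₁ - d₂) := by
  have key : ∀ n : Fin N, (x n : ℝ) =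
      ((kap h₁ h₂ N x n : ℝ)) + (if x n = Dv₁ D d₁ h₁ then d₁ - d₂ else 0) := by
    intro n
    rw [kap]
    by_cases h : x n = Dv₁ D d₁ h₁
    · rw [if_pos h, if_pos h, h]
      simp [Dv₁, Dv₂]
    · rw [if_neg h, if_neg h, add_zero]
  rw [Finset.sum_congr rfl (fun n _ => key n), Finset.sum_add_distrib]
  congr 1
  rw [← Finset.sum_filter]
  rw [Finset.sum_const]
  rw [nsmul_eq_mul]
  rfl

lemma sum_shift (hne : d₁ ≠ d₂) {a : Fin N → ↥D} (ha : a ∈ Sgood h₁ h₂ N) :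
    ∑ n : Fin N, ((gmap h₁ h₂ N a n : ℝ)) = (d₂ - d₁) + ∑ n : Fin N, ((a n : ℝ)) := by
  have hm := gmap_mem h₁ h₂ N hne ha
  rw [mem_Fib] at hm
  rw [mem_Sgood] at ha
  have e1 := sum_eq_kap h₁ h₂ N a
  have e2 := sum_eq_kap h₁ h₂ N (gmap h₁ h₂ N a)
  rw [hm.1, hm.2] at e2
  have hcast : (((Aset h₁ N a).card - 1 : ℕ) : ℝ) = ((Aset h₁ N a).card : ℝ) - 1 := by
    have := ha.1
    push_cast [Nat.cast_sub this]
    ring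
  rw [e2, e1, hcast]
  ring

lemma Sc_card_eq (hne : d₁ ≠ d₂) :
    (univ \ Sgood h₁ h₂ N).card =
      ∑ b ∈ noD1 h₁ N, ((Bset h₂ N b).card).choose ((Bset h₂ N b).card / 2) := by
  rw [Finset.card_eq_sum_card_fiberwise
    (f := kap h₁ h₂ N) (t := noD1 h₁ N) (fun x _ => kap_mem_noD1 h₁ h₂ N hne x)]
  apply Finset.sum_congr rfl
  intro b hb
  simp only [noD1, mem_filter, mem_univ, true_and] at hb
  set t := (Bset h₂ N b).card with ht
  -- partition the fiber by the size of Aset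
  rw [Finset.card_eq_sum_card_fiberwise
    (f := fun x => (Aset h₁ N x).card) (t := Finset.range (t+1)) ?hmem]
  case hmem =>
    intro x hx
    simp only [Finset.mem_coe, mem_filter] at hx
    rw [Finset.mem_coe, Finset.mem_range]
    show (Aset h₁ N x).card < t+1
    have : Aset h₁ N x ⊆ Bset h₂ N b := Aset_subset_Bset h₁ h₂ N hx.2
    have := Finset.card_le_card this
    omega
  -- identify each piece
  have piece : ∀ m, (((univ \ Sgood h₁ h₂ N).filter (fun x => kap h₁ h₂ N x = b)).filter
      (fun x => (Aset h₁ N x).card = m)) =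
      (if m = 0 then Fib h₁ h₂ N b 0 else Fib h₁ h₂ N b m \ sel h₁ h₂ N b m) := by
    intro m
    ext x
    simp only [Finset.mem_filter, Finset.mem_sdiff, Finset.mem_univ, true_and, mem_Fib,
      mem_Sgood]
    by_cases hm : m = 0
    · subst hm
      rw [if_pos rfl, mem_Fib]
      constructor
      · rintro ⟨⟨_, hk⟩, hA⟩; exact ⟨hk, hA⟩
      · rintro ⟨hk, hA⟩
        exact ⟨⟨fun hcon => by omega, hk⟩, hA⟩
    · rw [if_neg hm, Finset.mem_sdiff, mem_Fib]
      constructor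
      · rintro ⟨⟨hS, hk⟩, hA⟩
        refine ⟨⟨hk, hA⟩, fun hsel => hS ⟨by omega, ?_⟩⟩
        rw [hk, hA]; exact hsel
      · rintro ⟨⟨hk, hA⟩, hsel⟩
        refine ⟨⟨fun hcon => ?_, hk⟩, hA⟩
        rw [hk, hA] at hcon
        exact hsel hcon.2
  have cards : ∀ m, (((univ \ Sgood h₁ h₂ N).filter (fun x => kap h₁ h₂ N x = b)).filter
      (fun x => (Aset h₁ N x).card = m)).card =
      (if m = 0 then 1 else t.choose m - (if 2*m ≤ t then t.choose (m-1) else t.choose m)) := by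
    intro m
    rw [piece m]
    by_cases hm : m = 0
    · subst hm
      rw [if_pos rfl, if_pos rfl, Fib_card h₁ h₂ N hb]
      exact Nat.choose_zero_right t
    · rw [if_neg hm, if_neg hm,
        Finset.card_sdiff_of_subset (sel_subset h₁ h₂ N b m),
        Fib_card h₁ h₂ N hb, sel_card h₁ h₂ N hb (by omega)]
  rw [Finset.sum_congr rfl (fun m _ => cards m)]
  rw [Finset.sum_range_succ']
  have hterm : ∀ i, (if i+1 = 0 then 1 else
        t.choose (i+1) - (if 2*(i+1) ≤ t then t.choose (i+1-1) else t.choose (i+1)))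
      = (if i+1 ≤ t/2 then t.choose (i+1) - t.choose i else 0) := by
    intro i
    rw [if_neg (Nat.succ_ne_zero i), Nat.add_sub_cancel]
    by_cases h : 2*(i+1) ≤ t
    · rw [if_pos h, if_pos (by omega)]
    · rw [if_neg h, if_neg (by omega), Nat.sub_self]
  rw [Finset.sum_congr rfl (fun i _ => hterm i)]
  rw [telescope_sum t (fun m => t.choose m) (t/2) (Nat.div_le_self t 2)
    (fun i hi => by
      have := choose_mono_lower (t := t) (m := i+1) (by omega) (by omega)
      simpa using this)]
  rw [if_pos rfl]
  have hpos : 1 ≤ t.choose (t/2) := Nat.choose_pos (Nat.div_le_self t 2)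
  rw [Nat.choose_zero_right]
  omega


lemma total_card (hne : d₁ ≠ d₂) :
    ∑ b ∈ noD1 h₁ N, 2 ^ (Bset h₂ N b).card = D.card ^ N := by
  have e1 : (Finset.univ : Finset (Fin N → ↥D)).card = D.card ^ N := by
    rw [Finset.card_univ]
    rw [Fintype.card_fun]
    rw [Fintype.card_coe, Fintype.card_fin]
  rw [← e1]
  rw [Finset.card_eq_sum_card_fiberwise
    (f := kap h₁ h₂ N) (t := noD1 h₁ N) (fun x _ => kap_mem_noD1 h₁ h₂ N hne x)]
  apply Finset.sum_congr rfl
  intro b hb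
  simp only [noD1, mem_filter, mem_univ, true_and] at hb
  exact (fiber_card h₁ h₂ N hb).symm

lemma small_t_bound (hne : d₁ ≠ d₂) (d₃ : ℝ) (h₃ : d₃ ∈ (D.erase d₁).erase d₂) (T : ℕ) :
    ((noD1 h₁ N).filter (fun b => (Bset h₂ N b).card < T)).card ≤
      (∑ t ∈ Finset.range T, N.choose t) * (D.card - 2) ^ N := by
  classical
  set D' : Finset ℝ := (D.erase d₁).erase d₂ with hD'
  set target : Finset (Finset (Fin N) × (Fin N → ↥D')) :=
    ((Finset.range T).biUnion (fun t => Finset.univ.powersetCard t)) ×ˢ Finset.univ with htarget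
  have hcard_target : target.card ≤ (∑ t ∈ Finset.range T, N.choose t) * (D.card - 2) ^ N := by
    rw [htarget, Finset.card_product]
    apply Nat.mul_le_mul
    · refine le_trans (Finset.card_biUnion_le) ?_
      apply Finset.sum_le_sum
      intro t _
      rw [Finset.card_powersetCard, Finset.card_univ, Fintype.card_fin]
    · rw [Finset.card_univ, Fintype.card_fun, Fintype.card_coe, Fintype.card_fin]
      have hd2 : d₂ ∈ D.erase d₁ := Finset.mem_erase.mpr ⟨fun h => hne h.symm, h₂⟩
      have : D'.card = D.card - 2 := by
        rw [hD', Finset.card_erase_of_mem hd2, Finset.card_erase_of_mem h₁]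
        omega
      rw [this]
  refine le_trans ?_ hcard_target
  apply Finset.card_le_card_of_injOn
    (fun b => (Bset h₂ N b, fun i => if h : ((b i : ℝ) ∈ D') then (⟨(b i : ℝ), h⟩ : ↥D')
      else ⟨d₃, h₃⟩))
  · intro b hb
    simp only [Finset.mem_coe, Finset.mem_filter] at hb
    rw [Finset.mem_coe, htarget, Finset.mem_product]
    constructor
    · rw [Finset.mem_biUnion]
      exact ⟨(Bset h₂ N b).card, Finset.mem_range.mpr hb.2,
        Finset.mem_powersetCard.mpr ⟨Finset.subset_univ _, rfl⟩⟩
    · exact Finset.mem_univ _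
  · intro b hb b' hb' heq
    simp only [Finset.mem_coe, Finset.mem_filter] at hb hb'
    have hB : Bset h₂ N b = Bset h₂ N b' := congrArg Prod.fst heq
    have hfn := congrArg Prod.snd heq
    simp only at hfn
    have hb1 : ∀ i, b i ≠ Dv₁ D d₁ h₁ := by
      have := hb.1; simp only [noD1, mem_filter] at this; exact this.2
    have hb1' : ∀ i, b' i ≠ Dv₁ D d₁ h₁ := by
      have := hb'.1; simp only [noD1, mem_filter] at this; exact this.2
    funext i
    by_cases hi : i ∈ Bset h₂ N b
    · have hi' : i ∈ Bset h₂ N b' := hB ▸ hi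
      rw [(mem_Bset h₂ N).mp hi, (mem_Bset h₂ N).mp hi']
    · have hi' : i ∉ Bset h₂ N b' := fun h => hi (hB ▸ h)
      have hm : (b i : ℝ) ∈ D' := by
        rw [hD', Finset.mem_erase, Finset.mem_erase]
        refine ⟨fun h => hi ((mem_Bset h₂ N).mpr (Subtype.ext h)), ?_,  (b i).2⟩
        exact fun h => (hb1 i) (Subtype.ext h)
      have hm' : (b' i : ℝ) ∈ D' := by
        rw [hD', Finset.mem_erase, Finset.mem_erase]
        refine ⟨fun h => hi' ((mem_Bset h₂ N).mpr (Subtype.ext h)), ?_, (b' i).2⟩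
        exact fun h => (hb1' i) (Subtype.ext h)
      have heqi := congrFun hfn i
      rw [dif_pos hm, dif_pos hm'] at heqi
      have hval : ((⟨(b i : ℝ), hm⟩ : ↥D') : ℝ) = ((⟨(b' i : ℝ), hm'⟩ : ↥D') : ℝ) :=
        congrArg Subtype.val heqi
      exact Subtype.ext hval


lemma choose_le_two_pow' (t m : ℕ) : t.choose m ≤ 2 ^ t := by
  rcases Nat.lt_or_ge t m with h | h
  · rw [Nat.choose_eq_zero_of_lt h]; positivity
  · calc t.choose m ≤ ∑ j ∈ Finset.range (t+1), t.choose j :=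
        Finset.single_le_sum (fun j _ => Nat.zero_le _) (Finset.mem_range.mpr (by omega))
      _ = 2 ^ t := Nat.sum_range_choose t

lemma Sc_le (hne : d₁ ≠ d₂) (ε : ℝ) (T : ℕ) (hε : 0 < ε)
    (hmid : ∀ t : ℕ, T ≤ t → ((t.choose (t/2) : ℝ)) ≤ ε/2 * 2^t)
    (hsmall : (2:ℝ)^T * (((noD1 h₁ N).filter (fun b => (Bset h₂ N b).card < T)).card : ℝ)
      ≤ ε/2 * (D.card : ℝ)^N) :
    (((univ \ Sgood h₁ h₂ N).card : ℝ)) ≤ ε * (D.card : ℝ)^N := by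
  rw [Sc_card_eq h₁ h₂ N hne]
  push_cast
  have perb : ∀ b ∈ noD1 h₁ N,
      (((Bset h₂ N b).card.choose ((Bset h₂ N b).card / 2) : ℝ)) ≤
        ε/2 * 2^((Bset h₂ N b).card) +
          (if (Bset h₂ N b).card < T then (2:ℝ)^T else 0) := by
    intro b _
    set t := (Bset h₂ N b).card
    rcases Nat.lt_or_ge t T with h | h
    · rw [if_pos h]
      have : (t.choose (t/2) : ℝ) ≤ (2:ℝ)^T := by
        calc (t.choose (t/2) : ℝ) ≤ ((2^t : ℕ) : ℝ) := by
              exact_mod_cast choose_le_two_pow' t (t/2)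
          _ ≤ (2:ℝ)^T := by
              push_cast
              exact pow_le_pow_right₀ (by norm_num) (by omega)
      have h2 : (0:ℝ) ≤ ε/2 * 2^t := by positivity
      linarith
    · rw [if_neg (by omega)]
      have := hmid t h
      linarith
  calc (∑ b ∈ noD1 h₁ N, ((Bset h₂ N b).card.choose ((Bset h₂ N b).card / 2) : ℝ))
      ≤ ∑ b ∈ noD1 h₁ N, (ε/2 * 2^((Bset h₂ N b).card) +
          (if (Bset h₂ N b).card < T then (2:ℝ)^T else 0)) := Finset.sum_le_sum perb
    _ = ε/2 * (∑ b ∈ noD1 h₁ N, (2:ℝ)^((Bset h₂ N b).card)) +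
        (((noD1 h₁ N).filter (fun b => (Bset h₂ N b).card < T)).card : ℝ) * (2:ℝ)^T := by
        rw [Finset.sum_add_distrib, Finset.mul_sum]
        congr 1
        rw [← Finset.sum_filter, Finset.sum_const, nsmul_eq_mul]
    _ ≤ ε/2 * (D.card : ℝ)^N + ε/2 * (D.card : ℝ)^N := by
        have e1 : (∑ b ∈ noD1 h₁ N, (2:ℝ)^((Bset h₂ N b).card)) = (D.card : ℝ)^N := by
          have := total_card h₁ h₂ N hne
          have := congrArg (fun n : ℕ => (n : ℝ)) this
          push_cast at this
          exact this
        rw [e1]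
        have := hsmall
        nlinarith [hsmall]
    _ = ε * (D.card : ℝ)^N := by ring

end Core

/-- **Lemma 2.** Let `D` be a finite set of `k ≥ 2` reals, and let `d₁ ≠ d₂` be two of its
elements. For every `ε > 0` there is `N₀` such that for all `N ≥ N₀` there exist a set `S`
of `N`-tuples from `D` with `#S ≥ (1 - ε) k^N` and a map `g` of `N`-tuples, injective on `S`,
which raises the coordinate sum by exactly `d₂ - d₁`. -/
theorem shift_bijection_on_large_subset
    (D : Finset ℝ) (hD : 2 ≤ D.card) (d₁ d₂ : ℝ) (h₁ : d₁ ∈ D) (h₂ : d₂ ∈ D) (hne : d₁ ≠ d₂) :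
    ∀ ε : ℝ, 0 < ε → ∃ N₀ : ℕ, ∀ N : ℕ, N₀ ≤ N →
      ∃ (S : Finset (Fin N → D)) (g : (Fin N → D) → (Fin N → D)),
        (1 - ε) * (D.card : ℝ) ^ N ≤ (S.card : ℝ) ∧
        Set.InjOn g ↑S ∧
        ∀ a ∈ S, ∑ n : Fin N, (g a n : ℝ) = (d₂ - d₁) + ∑ n : Fin N, (a n : ℝ) := by
  intro ε hε
  set T : ℕ := ⌈4/ε^2⌉₊ with hTdef
  have hT4 : 4/ε^2 ≤ (T:ℝ) + 1 := le_trans (Nat.le_ceil _) (by linarith)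
  have hmid : ∀ t : ℕ, T ≤ t → ((t.choose (t/2) : ℝ)) ≤ ε/2 * 2^t := by
    intro t ht
    have hnat := middle_sq_bound t
    have hc : (((t:ℝ))+1) * ((t.choose (t/2):ℝ))^2 ≤ (4:ℝ)^t := by exact_mod_cast hnat
    have htT : (T:ℝ) ≤ (t:ℝ) := by exact_mod_cast ht
    have ht1 : 4/ε^2 ≤ (t:ℝ)+1 := by linarith
    have hC0 : (0:ℝ) ≤ (t.choose (t/2):ℝ) := Nat.cast_nonneg _
    have h4e : 4 ≤ ε^2 * ((t:ℝ)+1) := by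
      rw [div_le_iff₀ (by positivity)] at ht1
      linarith
    have h2t : (4:ℝ)^t = ((2:ℝ)^t)^2 := by
      rw [← pow_mul, pow_mul']
      norm_num
    have hs2 : ((t.choose (t/2):ℝ))^2 ≤ (ε/2 * 2^t)^2 := by
      have htpos : (0:ℝ) < (t:ℝ)+1 := by positivity
      rw [← mul_le_mul_iff_right₀ htpos]
      calc ((t:ℝ)+1) * ((t.choose (t/2):ℝ))^2 ≤ (4:ℝ)^t := hc
        _ ≤ ((t:ℝ)+1) * (ε/2 * 2^t)^2 := by
            rw [mul_pow, h2t]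
            have h2tp : (0:ℝ) < ((2:ℝ)^t)^2 := by positivity
            have : (1:ℝ) ≤ ((t:ℝ)+1) * (ε/2)^2 := by nlinarith
            nlinarith
    have hspos : (0:ℝ) ≤ ε/2 * 2^t := by positivity
    nlinarith [hs2, hC0, hspos]
  -- common ending
  have key : ∀ N : ℕ,
      ((2:ℝ)^T * ((((noD1 h₁ N).filter (fun b => (Bset h₂ N b).card < T)).card : ℝ))
        ≤ ε/2 * (D.card : ℝ)^N) →
      ∃ (S : Finset (Fin N → D)) (g : (Fin N → D) → (Fin N → D)),
        (1 - ε) * (D.card : ℝ) ^ N ≤ (S.card : ℝ) ∧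
        Set.InjOn g ↑S ∧
        ∀ a ∈ S, ∑ n : Fin N, (g a n : ℝ) = (d₂ - d₁) + ∑ n : Fin N, (a n : ℝ) := by
    intro N hsmall
    have hSc := Sc_le h₁ h₂ N hne ε T hε hmid hsmall
    refine ⟨Sgood h₁ h₂ N, gmap h₁ h₂ N, ?_, gmap_injOn h₁ h₂ N hne,
      fun a ha => sum_shift h₁ h₂ N hne ha⟩
    have univcard : (Finset.univ : Finset (Fin N → ↥D)).card = D.card ^ N := by
      rw [Finset.card_univ, Fintype.card_fun, Fintype.card_coe, Fintype.card_fin]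
    have hsub : (Sgood h₁ h₂ N).card ≤ (Finset.univ : Finset (Fin N → ↥D)).card :=
      Finset.card_le_card (Finset.subset_univ _)
    have hsd : (Finset.univ \ Sgood h₁ h₂ N).card
        = (Finset.univ : Finset (Fin N → ↥D)).card - (Sgood h₁ h₂ N).card :=
      Finset.card_sdiff_of_subset (Finset.subset_univ _)
    have hreal : ((Sgood h₁ h₂ N).card : ℝ)
        = (D.card : ℝ)^N - ((Finset.univ \ Sgood h₁ h₂ N).card : ℝ) := by
      rw [hsd, Nat.cast_sub hsub, univcard]
      push_cast
      ring
    rw [hreal]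
    linarith
  rcases Nat.lt_or_ge 2 D.card with hk | hk
  · -- D.card ≥ 3
    have hd3 : (((D.erase d₁).erase d₂)).Nonempty := by
      rw [← Finset.card_pos]
      have hd2 : d₂ ∈ D.erase d₁ := Finset.mem_erase.mpr ⟨fun h => hne h.symm, h₂⟩
      rw [Finset.card_erase_of_mem hd2, Finset.card_erase_of_mem h₁]
      omega
    obtain ⟨d₃, h₃⟩ := hd3
    have hk2pos : (0:ℝ) < (D.card : ℝ) - 2 := by
      have : (3:ℝ) ≤ (D.card : ℝ) := by exact_mod_cast hk
      linarith
    have hkpos : (0:ℝ) < (D.card : ℝ) := by linarith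
    set ρ : ℝ := (D.card : ℝ) / ((D.card : ℝ) - 2) with hρdef
    have hρ : 1 < ρ := by
      rw [hρdef, lt_div_iff₀ hk2pos]
      linarith
    set c : ℝ := (ε/2) / ((2:ℝ)^T * T + 1) with hcdef
    have hTpos : (0:ℝ) < (2:ℝ)^T * T + 1 := by positivity
    have hc : 0 < c := by rw [hcdef]; positivity
    have hlo := isLittleO_pow_const_const_pow_of_one_lt (R := ℝ) T hρ
    have hev := hlo.def hc
    rw [Filter.eventually_atTop] at hev
    obtain ⟨M, hM⟩ := hev
    refine ⟨max M 1, fun N hN => ?_⟩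
    apply key N
    -- the small-t bound
    have hfilter : (((noD1 h₁ N).filter (fun b => (Bset h₂ N b).card < T)).card : ℝ)
        ≤ (T : ℝ) * (N:ℝ)^T * ((D.card - 2 : ℕ) : ℝ)^N := by
      have hb := small_t_bound h₁ h₂ N hne d₃ h₃ T
      have hsum : (∑ t ∈ Finset.range T, N.choose t) ≤ T * N^T := by
        calc (∑ t ∈ Finset.range T, N.choose t) ≤ ∑ t ∈ Finset.range T, N^T := by
              apply Finset.sum_le_sum
              intro t htT
              calc N.choose t ≤ N^t := Nat.choose_le_pow N t
                _ ≤ N^T := Nat.pow_le_pow_right (by omega) (by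
                    simp only [Finset.mem_range] at htT; omega)
          _ = T * N^T := by rw [Finset.sum_const, Finset.card_range, smul_eq_mul]
      have := le_trans hb (Nat.mul_le_mul_right _ hsum)
      calc (((noD1 h₁ N).filter (fun b => (Bset h₂ N b).card < T)).card : ℝ)
          ≤ ((T * N^T * (D.card - 2)^N : ℕ) : ℝ) := by exact_mod_cast this
        _ = (T : ℝ) * (N:ℝ)^T * ((D.card - 2 : ℕ) : ℝ)^N := by push_cast; ring
    have hNT : ((N:ℝ))^T ≤ c * ρ^N := by
      have := hM N (le_trans (le_max_left _ _) hN)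
      rw [Real.norm_eq_abs, Real.norm_eq_abs] at this
      have hρpos : (0:ℝ) < ρ := lt_trans one_pos hρ
      rw [abs_of_nonneg (by positivity), abs_of_nonneg (by positivity)] at this
      exact this
    have hcast2 : ((D.card - 2 : ℕ) : ℝ) = (D.card : ℝ) - 2 := by
      have : 2 ≤ D.card := hD
      push_cast [Nat.cast_sub this]
      ring
    have hprod : ρ^N * ((D.card : ℝ) - 2)^N = (D.card : ℝ)^N := by
      rw [← mul_pow, hρdef, div_mul_cancel₀]
      exact ne_of_gt hk2pos
    calc (2:ℝ)^T * ((((noD1 h₁ N).filter (fun b => (Bset h₂ N b).card < T)).card : ℝ))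
        ≤ (2:ℝ)^T * ((T : ℝ) * (N:ℝ)^T * ((D.card : ℝ) - 2)^N) := by
          rw [← hcast2]
          apply mul_le_mul_of_nonneg_left _ (by positivity)
          exact hfilter
      _ ≤ (2:ℝ)^T * ((T : ℝ) * (c * ρ^N) * ((D.card : ℝ) - 2)^N) := by
          apply mul_le_mul_of_nonneg_left _ (by positivity)
          apply mul_le_mul_of_nonneg_right _ (by positivity)
          apply mul_le_mul_of_nonneg_left hNT (by positivity)
      _ = ((2:ℝ)^T * (T:ℝ) * c) * (ρ^N * ((D.card : ℝ) - 2)^N) := by ring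
      _ = ((2:ℝ)^T * (T:ℝ) * c) * (D.card : ℝ)^N := by rw [hprod]
      _ ≤ ε/2 * (D.card : ℝ)^N := by
          apply mul_le_mul_of_nonneg_right _ (by positivity)
          rw [hcdef]
          have heq : (2:ℝ)^T * (T:ℝ) * ((ε/2) / ((2:ℝ)^T * T + 1))
              = (ε/2) * (((2:ℝ)^T * T)/((2:ℝ)^T * T + 1)) := by ring
          rw [heq]
          have hle1 : ((2:ℝ)^T * T)/((2:ℝ)^T * T + 1) ≤ 1 := by
            rw [div_le_one hTpos]; linarith
          exact mul_le_of_le_one_right (le_of_lt (half_pos hε)) hle1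
  · -- D.card = 2
    have hk2 : D.card = 2 := le_antisymm hk hD
    refine ⟨T, fun N hN => ?_⟩
    apply key N
    have hempty : ((noD1 h₁ N).filter (fun b => (Bset h₂ N b).card < T)) = ∅ := by
      rw [Finset.filter_eq_empty_iff]
      intro b hb
      simp only [noD1, Finset.mem_filter, Finset.mem_univ, true_and] at hb
      have hDeq : ({d₁, d₂} : Finset ℝ) = D := by
        apply Finset.eq_of_subset_of_card_le
        · rw [Finset.insert_subset_iff, Finset.singleton_subset_iff]
          exact ⟨h₁, h₂⟩
        · rw [hk2, Finset.card_insert_of_notMem (by simp [hne]), Finset.card_singleton]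
      have hall : ∀ x : ↥D, x = Dv₁ D d₁ h₁ ∨ x = Dv₂ D d₂ h₂ := by
        intro x
        have hx : (x : ℝ) ∈ ({d₁, d₂} : Finset ℝ) := by rw [hDeq]; exact x.2
        rw [Finset.mem_insert, Finset.mem_singleton] at hx
        rcases hx with hx | hx
        · left; exact Subtype.ext hx
        · right; exact Subtype.ext hx
      have hBuniv : Bset h₂ N b = Finset.univ := by
        apply Finset.eq_univ_of_forall
        intro i
        rw [mem_Bset]
        rcases hall (b i) with h | h
        · exact absurd h (hb i)
        · exact h
      rw [hBuniv]
      simp only [Finset.card_univ, Fintype.card_fin]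
      omega
    rw [hempty]
    simp only [Finset.card_empty, Nat.cast_zero, mul_zero]
    positivity
end

section
/- Let D be a finite set of real numbers with at least two elements such that Σ_{d∈D} d > 0, and let ℙ be the product probability measure on Ω = D^ℕ (each coordinate uniform on D). Then there exists K ∈ ℝ such that ℙ({(aₙ) ∈ Ω : Σ_{n=1}^∞ aₙ xⁿ > K for every x ∈ (0,1)}) > 0. -/
open MeasureTheory ProbabilityTheory Filter Topology Set ENNReal


-- Abel identity
lemma abel_identity (a : ℕ → ℝ) (M : ℝ) (hM : ∀ n, |a n| ≤ M)
    (x : ℝ) (hx0 : 0 < x) (hx1 : x < 1) :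
    Summable (fun m => (∑ i ∈ Finset.range m, a i) * x ^ m) ∧
    ∑' n : ℕ, a n * x ^ (n + 1)
      = (1 - x) * ∑' m : ℕ, (∑ i ∈ Finset.range m, a i) * x ^ m := by
  set S : ℕ → ℝ := fun m => ∑ i ∈ Finset.range m, a i with hS
  have hxn : ‖x‖ < 1 := by rw [Real.norm_eq_abs, abs_of_pos hx0]; exact hx1
  have hg : Summable (fun m => S m * x ^ m) := by
    refine Summable.of_norm_bounded (g := fun m => M * ((m:ℝ) * x ^ m))
      (Summable.mul_left _ (by simpa using summable_pow_mul_geometric_of_norm_lt_one 1 hxn)) ?_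
    intro m
    have h1 : |S m| ≤ M * m := by
      calc |S m| ≤ ∑ i ∈ Finset.range m, |a i| := Finset.abs_sum_le_sum_abs _ _
      _ ≤ ∑ i ∈ Finset.range m, M := Finset.sum_le_sum (fun i _ => hM i)
      _ = M * m := by simp [mul_comm]
    have h2 : 0 < x ^ m := pow_pos hx0 m
    calc ‖S m * x ^ m‖ = |S m| * x ^ m := by
          rw [norm_mul, Real.norm_eq_abs, Real.norm_eq_abs, abs_of_pos h2]
    _ ≤ M * m * x ^ m := by nlinarith
    _ = M * ((m:ℝ) * x ^ m) := by ring
  have hterm : ∀ n : ℕ, a n * x ^ (n + 1) = S (n+1) * x ^ (n+1) - x * (S n * x ^ n) := by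
    intro n
    have : S (n+1) = S n + a n := Finset.sum_range_succ a n
    rw [this]; ring
  have hshift : Summable (fun n => S (n+1) * x ^ (n+1)) := by
    have := (summable_nat_add_iff 1).2 hg
    exact this
  have hsa : Summable (fun n : ℕ => a n * x ^ (n + 1)) := by
    have := hshift.sub (hg.mul_left x)
    exact this.congr (fun n => (hterm n).symm)
  refine ⟨hg, ?_⟩
  have h1 : ∑' n : ℕ, a n * x ^ (n + 1)
      = (∑' n : ℕ, S (n+1) * x ^ (n+1)) - ∑' n : ℕ, x * (S n * x ^ n) := by
    rw [← Summable.tsum_sub hshift (hg.mul_left x)]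
    exact tsum_congr hterm
  have h2 : ∑' n : ℕ, S (n+1) * x ^ (n+1) = ∑' m : ℕ, S m * x ^ m := by
    have := Summable.tsum_eq_zero_add hg
    simp only [hS] at this ⊢
    rw [this]; simp
  have h3 : ∑' n : ℕ, x * (S n * x ^ n) = x * ∑' m : ℕ, S m * x ^ m := tsum_mul_left
  rw [h1, h2, h3]; ring

lemma det_bound (a : ℕ → ℝ) (M : ℝ) (hM : ∀ n, |a n| ≤ M)
    (htend : Tendsto (fun m => ∑ i ∈ Finset.range m, a i) atTop atTop) :
    ∃ j : ℕ, ∀ x ∈ Set.Ioo (0:ℝ) 1, -(j:ℝ) < ∑' n : ℕ, a n * x ^ (n + 1) := by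
  set S : ℕ → ℝ := fun m => ∑ i ∈ Finset.range m, a i with hS
  obtain ⟨N, hN⟩ := (htend.eventually_ge_atTop 0).exists_forall_of_atTop
  obtain ⟨c, hc⟩ := bddBelow_range_of_tendsto_atTop_atTop htend
  set C : ℝ := max 0 (-c) with hC
  have hC0 : 0 ≤ C := le_max_left _ _
  have hCb : ∀ m, -C ≤ S m := by
    intro m
    have := hc (Set.mem_range_self m)
    have : c ≤ S m := this
    have : -C ≤ c := by simp [hC]; linarith [le_max_right (0:ℝ) (-c)]
    linarith [hc (Set.mem_range_self m)]
  refine ⟨⌈C * N⌉₊ + 1, ?_⟩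
  intro x hx
  obtain ⟨hx0, hx1⟩ := hx
  obtain ⟨hg, hid⟩ := abel_identity a M hM x hx0 hx1
  rw [hid]
  set T : ℝ := ∑' m : ℕ, S m * x ^ m with hT
  have hsplit : T = (∑ m ∈ Finset.range N, S m * x ^ m) + ∑' m : ℕ, S (m + N) * x ^ (m + N) := by
    exact (Summable.sum_add_tsum_nat_add N hg).symm
  have htail : 0 ≤ ∑' m : ℕ, S (m + N) * x ^ (m + N) := by
    apply tsum_nonneg
    intro m
    exact mul_nonneg (hN (m + N) (Nat.le_add_left N m)) (le_of_lt (pow_pos hx0 _))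
  have hhead : -(C * N) ≤ ∑ m ∈ Finset.range N, S m * x ^ m := by
    have : ∀ m ∈ Finset.range N, -C ≤ S m * x ^ m := by
      intro m _
      have h1 := hCb m
      have h2 : 0 < x ^ m := pow_pos hx0 m
      have h3 : x ^ m ≤ 1 := pow_le_one₀ (le_of_lt hx0) (le_of_lt hx1)
      rcases le_or_gt 0 (S m) with h | h
      · nlinarith
      · nlinarith
    calc -(C * N) = ∑ m ∈ Finset.range N, (-C) := by simp [mul_comm]
    _ ≤ _ := Finset.sum_le_sum this
  have hTb : -(C * N) ≤ T := by rw [hsplit]; linarith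
  have hj : C * N < ((⌈C * N⌉₊ + 1 : ℕ) : ℝ) := by
    push_cast
    linarith [Nat.le_ceil (C * N)]
  nlinarith [mul_nonneg (mul_nonneg hC0 (Nat.cast_nonneg N)) (le_of_lt hx0)]

/-- **Lemma 4.** If the elements of `D` have positive sum, then there is a real `K` such that
with positive probability `∑ aₙ xⁿ > K` holds for every `x ∈ (0,1)`. -/
theorem positive_probability_uniform_lower_bound
(D : Finset ℝ) (hD : 2 ≤ D.card)
    (P : Measure (ℕ → ℝ)) [IsProbabilityMeasure P]
    (hindep : iIndepFun (fun n (a : ℕ → ℝ) => a n) P)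
    (hunif : ∀ n : ℕ,
      P.map (fun a => a n) = (D.card : ℝ≥0∞)⁻¹ • ∑ d ∈ D, Measure.dirac d)
    (hsum : 0 < ∑ d ∈ D, d) :
    ∃ K : ℝ, 0 < P {a : ℕ → ℝ |
      ∀ x ∈ Set.Ioo (0 : ℝ) 1, K < ∑' n : ℕ, a n * x ^ (n + 1)} := by
  have hDne : D.Nonempty := Finset.card_pos.1 (by omega)
  set M : ℝ := D.sup' hDne (fun d => |d|) with hM
  -- a.e. each coordinate lands in D
  have hmem : ∀ᵐ a ∂P, ∀ n, a n ∈ D := by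
    rw [ae_all_iff]
    intro n
    have hmeas : Measurable (fun a : ℕ → ℝ => a n) := measurable_pi_apply n
    have hDm : MeasurableSet ((D : Set ℝ))ᶜ := (D.finite_toSet.measurableSet).compl
    have : P ((fun a : ℕ → ℝ => a n) ⁻¹' ((D : Set ℝ))ᶜ) = 0 := by
      rw [← Measure.map_apply hmeas hDm, hunif n]
      simp only [Measure.smul_apply, Measure.coe_finset_sum, Finset.sum_apply, smul_eq_mul]
      have : ∀ d ∈ D, Measure.dirac d ((D : Set ℝ))ᶜ = 0 := by
        intro d hd
        rw [Measure.dirac_apply' _ hDm]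
        simp [hd]
      rw [Finset.sum_congr rfl this]
      simp
    rw [ae_iff]
    convert this using 2
    ext a; simp
  have hXmeas : ∀ n, Measurable (fun a : ℕ → ℝ => a n) := fun n => measurable_pi_apply n
  have hident : ∀ i, IdentDistrib (fun a : ℕ → ℝ => a i) (fun a : ℕ → ℝ => a 0) P P :=
    fun i => ⟨(hXmeas i).aemeasurable, (hXmeas 0).aemeasurable, by rw [hunif i, hunif 0]⟩
  have hMb : ∀ᵐ a ∂P, ∀ n, |a n| ≤ M := by
    filter_upwards [hmem] with a ha n
    exact Finset.le_sup' (fun d => |d|) (ha n)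
  have hint : Integrable (fun a : ℕ → ℝ => a 0) P := by
    refine ⟨(hXmeas 0).aestronglyMeasurable, ?_⟩
    apply MeasureTheory.HasFiniteIntegral.of_bounded (C := M)
    filter_upwards [hMb] with a ha
    simpa [Real.norm_eq_abs] using ha 0
  have hpair : Pairwise (Function.onFun (IndepFun · · P) (fun n (a : ℕ → ℝ) => a n)) :=
    fun i j hij => hindep.indepFun hij
  have hslln := strong_law_ae_real (μ := P) (fun n (a : ℕ → ℝ) => a n) hint hpair hident
  have hmean : P[fun a : ℕ → ℝ => a 0] = (D.card : ℝ)⁻¹ * ∑ d ∈ D, d := by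
    have h0 : P[fun a : ℕ → ℝ => a 0] = ∫ x, x ∂(P.map (fun a => a 0)) :=
      (integral_map (hXmeas 0).aemeasurable aestronglyMeasurable_id).symm
    rw [h0, hunif 0, integral_smul_measure, integral_finset_sum_measure]
    · simp [ENNReal.toReal_inv]
    · intro d _
      refine ⟨aestronglyMeasurable_id, ?_⟩
      rw [HasFiniteIntegral, lintegral_dirac]
      exact ENNReal.coe_lt_top
  have hμpos : 0 < P[fun a : ℕ → ℝ => a 0] := by
    rw [hmean]
    have : (0:ℝ) < (D.card : ℝ) := by positivity
    positivity
  -- a.e. the partial sums tend to infinity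
  have hStend : ∀ᵐ a ∂P, Tendsto (fun m => ∑ i ∈ Finset.range m, a i) atTop atTop := by
    filter_upwards [hslln] with a ha
    have h1 : Tendsto (fun n : ℕ =>
        ((∑ i ∈ Finset.range n, a i) / n) * n) atTop atTop :=
      Tendsto.pos_mul_atTop hμpos ha tendsto_natCast_atTop_atTop
    refine h1.congr' ?_
    filter_upwards [eventually_ge_atTop 1] with n hn
    have : (n:ℝ) ≠ 0 := by positivity
    field_simp
  -- a.e. there is a uniform lower bound
  have hkey : ∀ᵐ a ∂P, ∃ j : ℕ, ∀ x ∈ Set.Ioo (0:ℝ) 1,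
      -(j:ℝ) < ∑' n : ℕ, a n * x ^ (n + 1) := by
    filter_upwards [hMb, hStend] with a ha hS
    exact det_bound a M ha hS
  by_contra hcon
  push_neg at hcon
  have hzero : ∀ j : ℕ, P {a : ℕ → ℝ |
      ∀ x ∈ Set.Ioo (0 : ℝ) 1, -(j:ℝ) < ∑' n : ℕ, a n * x ^ (n + 1)} = 0 :=
    fun j => le_antisymm (hcon (-(j:ℝ))) (zero_le)
  have hnot : ∀ᵐ a ∂P, ∀ j : ℕ, ¬ ∀ x ∈ Set.Ioo (0:ℝ) 1,
      -(j:ℝ) < ∑' n : ℕ, a n * x ^ (n + 1) := by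
    rw [ae_all_iff]
    intro j
    have := hzero j
    rw [ae_iff]
    simpa using this
  have : ∀ᵐ a ∂P, False := by
    filter_upwards [hkey, hnot] with a ⟨j, hj⟩ hn
    exact hn j hj
  obtain ⟨a, ha⟩ := this.exists
  exact ha
end

section
/- Let D be a finite set of real numbers containing at least one positive and at least one negative element, and give Ω = D^ℕ the product topology (D discrete). Then for each m ∈ ℕ, the set F_m = {(aₙ) ∈ Ω : sup_{x∈(0,1)} Σ_{n=1}^∞ aₙ xⁿ ≤ m} is nowhere dense in Ω; consequently the set {(aₙ) ∈ Ω : sup_{x∈(0,1)} Σ_{n=1}^∞ aₙ xⁿ < +∞} is of first category (meager) in Ω. -/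
open Filter Topology Set

set_option maxHeartbeats 1000000

/-- If the finite set `D` contains a positive and a negative element, then in `Ω = D^ℕ`
(product topology, `D` discrete) each set
`F_m = {(aₙ) : ∑ aₙ xⁿ ≤ m for all x ∈ (0,1)}` is nowhere dense; consequently the set of
sequences whose power series is bounded above on `(0,1)` is meager. -/
theorem bounded_above_power_series_meager
    (D : Finset ℝ) (hpos : ∃ d ∈ D, 0 < d) (hneg : ∃ d ∈ D, d < 0) :
    (∀ m : ℕ, IsNowhereDense
      {a : ℕ → D | ∀ x ∈ Set.Ioo (0 : ℝ) 1, ∑' n : ℕ, (a n : ℝ) * x ^ (n + 1) ≤ m}) ∧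
    IsMeagre
      {a : ℕ → D | ∃ C : ℝ, ∀ x ∈ Set.Ioo (0 : ℝ) 1, ∑' n : ℕ, (a n : ℝ) * x ^ (n + 1) ≤ C} := by
  obtain ⟨dp, hdpD, hdp⟩ := hpos
  have hDne : D.Nonempty := ⟨dp, hdpD⟩
  set C : ℝ := D.sup' hDne (fun d => |d|) with hCdef
  have hC : ∀ d : D, |(d : ℝ)| ≤ C := fun d => Finset.le_sup' _ d.2
  have hC0 : 0 ≤ C := le_trans (abs_nonneg _) (hC ⟨dp, hdpD⟩)
  -- geometric summability
  have hgeo : ∀ x : ℝ, x ∈ Set.Ioo (0:ℝ) 1 → Summable (fun n : ℕ => x ^ (n+1)) := by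
    intro x hx
    have := (summable_geometric_of_lt_one hx.1.le hx.2).mul_left x
    refine this.congr fun n => ?_
    rw [pow_succ, mul_comm]
  have hsum : ∀ (c : ℕ → D) (x : ℝ), x ∈ Set.Ioo (0:ℝ) 1 →
      Summable (fun n : ℕ => (c n : ℝ) * x ^ (n+1)) := by
    intro c x hx
    refine Summable.of_norm_bounded ((hgeo x hx).mul_left C) fun n => ?_
    rw [norm_mul, norm_pow, Real.norm_eq_abs, Real.norm_eq_abs, abs_of_pos hx.1]
    exact mul_le_mul_of_nonneg_right (hC _) (pow_nonneg hx.1.le _)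
  -- tail bound
  have htail : ∀ (c : ℕ → D) (x : ℝ), x ∈ Set.Ioo (0:ℝ) 1 → ∀ M : ℕ,
      |∑' n : ℕ, (c (n + M) : ℝ) * x ^ (n + M + 1)| ≤ C * x ^ (M+1) * (1-x)⁻¹ := by
    intro c x hx M
    have hs : Summable (fun n : ℕ => (c (n+M) : ℝ) * x ^ (n+M+1)) :=
      (summable_nat_add_iff M).2 (hsum c x hx)
    have hgs : Summable (fun n : ℕ => C * x^(M+1) * x^n) :=
      (summable_geometric_of_lt_one hx.1.le hx.2).mul_left _
    have hpt : ∀ n : ℕ, ‖(c (n+M) : ℝ) * x ^ (n+M+1)‖ ≤ C * x^(M+1) * x^n := by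
      intro n
      rw [norm_mul, norm_pow, Real.norm_eq_abs, Real.norm_eq_abs, abs_of_pos hx.1,
        show n+M+1 = (M+1)+n by omega, pow_add, ← mul_assoc]
      exact mul_le_mul_of_nonneg_right
        (mul_le_mul_of_nonneg_right (hC _) (pow_nonneg hx.1.le _)) (pow_nonneg hx.1.le _)
    have habs : Summable (fun n : ℕ => ‖(c (n+M) : ℝ) * x ^ (n+M+1)‖) :=
      Summable.of_nonneg_of_le (fun n => norm_nonneg _) hpt hgs
    calc |∑' n : ℕ, (c (n + M) : ℝ) * x ^ (n + M + 1)|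
        ≤ ∑' n : ℕ, ‖(c (n+M) : ℝ) * x ^ (n+M+1)‖ := by
          simpa using norm_tsum_le_tsum_norm habs
      _ ≤ ∑' n : ℕ, C * x^(M+1) * x^n := Summable.tsum_le_tsum hpt habs hgs
      _ = C * x^(M+1) * (1-x)⁻¹ := by
          rw [tsum_mul_left, tsum_geometric_of_lt_one hx.1.le hx.2]
  have key : ∀ m : ℕ, IsNowhereDense
      {a : ℕ → D | ∀ x ∈ Set.Ioo (0 : ℝ) 1, ∑' n : ℕ, (a n : ℝ) * x ^ (n + 1) ≤ m} := by
    intro m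
    set F := {a : ℕ → D | ∀ x ∈ Set.Ioo (0 : ℝ) 1, ∑' n : ℕ, (a n : ℝ) * x ^ (n + 1) ≤ (m:ℝ)}
      with hF
    rw [IsNowhereDense, Set.eq_empty_iff_forall_notMem]
    intro a ha
    rw [mem_interior_iff_mem_nhds, nhds_pi, Filter.mem_pi'] at ha
    obtain ⟨I, t, htmem, hsub⟩ := ha
    obtain ⟨N, hN⟩ : ∃ N : ℕ, ∀ i ∈ I, i < N :=
      ⟨(I.sup id) + 1, fun i hi => Nat.lt_succ_of_le (Finset.le_sup (f := id) hi)⟩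
    set b : ℕ → D := fun n => if n < N then a n else ⟨dp, hdpD⟩ with hb
    have hbcl : b ∈ closure F := by
      apply hsub
      intro i hi
      have hbi : b i = a i := if_pos (hN i hi)
      rw [hbi]
      exact mem_of_mem_nhds (htmem i)
    -- choose x close to 1
    set K : ℝ := (m : ℝ) + C * N + 2 with hK
    have hK0 : 0 < K := by positivity
    set δ : ℝ := min (1 / (2 * ((N:ℝ) + 1))) (dp / (2 * K)) with hδ
    have hδ0 : 0 < δ :=
      lt_min (div_pos one_pos (by positivity)) (div_pos hdp (by linarith))
    have hδN : δ * ((N:ℝ) + 1) ≤ 1/2 := by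
      have h1 : δ ≤ 1 / (2 * ((N:ℝ)+1)) := min_le_left _ _
      have hN1 : (0:ℝ) < (N:ℝ) + 1 := by positivity
      calc δ * ((N:ℝ)+1) ≤ (1 / (2 * ((N:ℝ)+1))) * ((N:ℝ)+1) :=
            mul_le_mul_of_nonneg_right h1 hN1.le
        _ = 1/2 := by field_simp
    have hδhalf : δ ≤ 1/2 := by
      nlinarith [hδ0, Nat.cast_nonneg (α := ℝ) N]
    set x : ℝ := 1 - δ with hxdef
    have hxI : x ∈ Set.Ioo (0:ℝ) 1 := ⟨by simp only [hxdef]; linarith, by simp only [hxdef]; linarith⟩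
    have h1x : 1 - x = δ := by simp [hxdef]
    -- lower bound on the series of b at x
    have hxN : (1:ℝ)/2 ≤ x ^ (N+1) := by
      have := one_add_mul_le_pow (a := -δ) (by linarith) (N+1)
      have h2 : 1 + ((N:ℝ)+1) * (-δ) = 1 - δ * ((N:ℝ)+1) := by ring
      calc (1:ℝ)/2 ≤ 1 - δ * ((N:ℝ)+1) := by linarith
        _ = 1 + ((N:ℝ)+1) * (-δ) := by ring
        _ ≤ (1 + -δ) ^ (N+1) := by
            simpa using one_add_mul_le_pow (a := -δ) (by linarith) (N+1)
        _ = x ^ (N+1) := by rw [hxdef]; ring_nf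
    have hSb : (m:ℝ) + 1 < ∑' n : ℕ, (b n : ℝ) * x ^ (n+1) := by
      have hsplit := Summable.sum_add_tsum_nat_add N (hsum b x hxI)
      -- tail of b is the constant dp sequence
      have htb : ∑' n : ℕ, (b (n+N) : ℝ) * x ^ (n+N+1) = dp * x^(N+1) * (1-x)⁻¹ := by
        have h1 : ∀ n : ℕ, (b (n+N) : ℝ) * x ^ (n+N+1) = dp * x^(N+1) * x^n := by
          intro n
          have : b (n+N) = ⟨dp, hdpD⟩ := if_neg (by omega)
          rw [this, show n+N+1 = (N+1)+n by omega, pow_add]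
          ring
        rw [tsum_congr h1, tsum_mul_left, tsum_geometric_of_lt_one hxI.1.le hxI.2]
      have hfront : -(C * N) ≤ ∑ i ∈ Finset.range N, (b i : ℝ) * x ^ (i+1) := by
        have : ∀ i ∈ Finset.range N, -C ≤ (b i : ℝ) * x ^ (i+1) := by
          intro i _
          have h1 : |(b i : ℝ) * x ^ (i+1)| ≤ C := by
            rw [abs_mul, abs_pow, abs_of_pos hxI.1]
            calc |(b i : ℝ)| * x ^ (i+1) ≤ C * 1 := by
                  apply mul_le_mul (hC _) (pow_le_one₀ hxI.1.le hxI.2.le) (pow_nonneg hxI.1.le _) hC0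
              _ = C := mul_one C
          linarith [neg_abs_le ((b i : ℝ) * x ^ (i+1))]
        calc -(C * N) = (Finset.range N).card • (-C) := by
              simp [nsmul_eq_mul]; ring
          _ ≤ ∑ i ∈ Finset.range N, (b i : ℝ) * x ^ (i+1) :=
              Finset.card_nsmul_le_sum _ _ _ this
      have hKle : K ≤ dp * x^(N+1) * (1-x)⁻¹ := by
        have h2 : δ ≤ dp / (2*K) := min_le_right _ _
        have h3 : K ≤ dp / (2*δ) := by
          have h2' : δ * (2*K) ≤ dp := (le_div_iff₀ (by positivity)).1 h2
          rw [le_div_iff₀ (by positivity)]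
          nlinarith
        calc K ≤ dp / (2*δ) := h3
          _ = dp * (1/2) * δ⁻¹ := by field_simp
          _ ≤ dp * x^(N+1) * (1-x)⁻¹ := by
              rw [h1x]
              apply mul_le_mul_of_nonneg_right _ (by positivity)
              exact mul_le_mul_of_nonneg_left hxN hdp.le
      calc (m:ℝ) + 1 < -(C*N) + K := by rw [hK]; linarith
        _ ≤ (∑ i ∈ Finset.range N, (b i : ℝ) * x ^ (i+1))
            + ∑' n : ℕ, (b (n+N) : ℝ) * x ^ (n+N+1) := by rw [htb]; exact add_le_add hfront hKle
        _ = ∑' n : ℕ, (b n : ℝ) * x ^ (n+1) := hsplit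
    -- choose the cylinder depth M
    obtain ⟨M, hM⟩ : ∃ M : ℕ, x ^ M < δ / (2*C+1) :=
      exists_pow_lt_of_lt_one (by positivity) hxI.2
    have hxM : C * x^(M+1) * (1-x)⁻¹ ≤ 1/2 := by
      rw [h1x]
      have h1 : x^(M+1) ≤ x^M := pow_le_pow_of_le_one hxI.1.le hxI.2.le (Nat.le_succ M)
      have h2 : x^(M+1) < δ / (2*C+1) := lt_of_le_of_lt h1 hM
      have h3 : C * x^(M+1) ≤ C * (δ / (2*C+1)) :=
        mul_le_mul_of_nonneg_left h2.le hC0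
      calc C * x^(M+1) * δ⁻¹ ≤ C * (δ / (2*C+1)) * δ⁻¹ :=
            mul_le_mul_of_nonneg_right h3 (by positivity)
        _ = C / (2*C+1) := by field_simp
        _ ≤ 1/2 := by rw [div_le_div_iff₀ (by positivity) (by norm_num)]; linarith
    -- the cylinder around b of depth M is open and misses F
    set V : Set (ℕ → D) := Set.pi (↑(Finset.range M) : Set ℕ) (fun n => {b n}) with hV
    have hVopen : IsOpen V :=
      isOpen_set_pi (Finset.range M).finite_toSet (fun n _ => isOpen_discrete _)
    have hbV : b ∈ V := fun i _ => rfl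
    obtain ⟨c, hcV, hcF⟩ := mem_closure_iff.1 hbcl V hVopen hbV
    -- compare the series of c and b at x
    have hcb : ∀ i ∈ Finset.range M, (c i : ℝ) * x ^ (i+1) = (b i : ℝ) * x ^ (i+1) := by
      intro i hi
      have : c i = b i := hcV i (by simpa using hi)
      rw [this]
    have hsplitc := Summable.sum_add_tsum_nat_add M (hsum c x hxI)
    have hsplitb := Summable.sum_add_tsum_nat_add M (hsum b x hxI)
    have heqfront : ∑ i ∈ Finset.range M, (c i : ℝ) * x ^ (i+1)
        = ∑ i ∈ Finset.range M, (b i : ℝ) * x ^ (i+1) := Finset.sum_congr rfl hcb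
    have hTb := htail b x hxI M
    have hTc := htail c x hxI M
    have hgt : (m:ℝ) < ∑' n : ℕ, (c n : ℝ) * x ^ (n+1) := by
      have e1 : ∑' n : ℕ, (c n : ℝ) * x ^ (n+1)
          = (∑' n : ℕ, (b n : ℝ) * x ^ (n+1))
            - (∑' n : ℕ, (b (n+M) : ℝ) * x ^ (n+M+1))
            + (∑' n : ℕ, (c (n+M) : ℝ) * x ^ (n+M+1)) := by
        rw [← hsplitc, ← hsplitb, heqfront]; ring
      rw [e1]
      have h4 := abs_le.1 hTb
      have h5 := abs_le.1 hTc
      linarith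
    exact absurd (hcF x hxI) (not_le.2 hgt)
  refine ⟨key, ?_⟩
  have hsub : {a : ℕ → D | ∃ C : ℝ, ∀ x ∈ Set.Ioo (0 : ℝ) 1,
        ∑' n : ℕ, (a n : ℝ) * x ^ (n + 1) ≤ C}
      ⊆ ⋃ m : ℕ, {a : ℕ → D | ∀ x ∈ Set.Ioo (0 : ℝ) 1,
        ∑' n : ℕ, (a n : ℝ) * x ^ (n + 1) ≤ (m:ℝ)} := by
    rintro a ⟨C', hC'⟩
    exact Set.mem_iUnion.2 ⟨⌈C'⌉₊, fun x hx => (hC' x hx).trans (Nat.le_ceil C')⟩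
  refine IsMeagre.mono hsub (isMeagre_iUnion fun m => ?_)
  rw [isMeagre_iff_countable_union_isNowhereDense]
  exact ⟨{closure {a : ℕ → D | ∀ x ∈ Set.Ioo (0 : ℝ) 1,
      ∑' n : ℕ, (a n : ℝ) * x ^ (n + 1) ≤ (m:ℝ)}},
    by simpa using (key m).closure, Set.countable_singleton _, by simpa using subset_closure⟩
end

section
/- Let D = {d₁, …, d_k} be a finite set of k ≥ 2 distinct real numbers, and let p₁, …, p_k be positive real numbers with Σ_{j=1}^k p_j = 1. Let ℙ be the product probability measure on Ω = D^ℕ in which each coordinate independently takes the value d_j with probability p_j. If Σ_{j=1}^k p_j d_j > 0, then with ℙ-probability 1 the power series f(x) = Σ_{n=1}^∞ aₙ xⁿ satisfies lim_{x→1⁻} f(x) = +∞; if Σ_{j=1}^k p_j d_j < 0, then with ℙ-probability 1 it satisfies lim_{x→1⁻} f(x) = −∞. -/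
open MeasureTheory ProbabilityTheory Filter Topology Set ENNReal

set_option maxHeartbeats 1000000

lemma abel_atTop (a : ℕ → ℝ) (C : ℝ) (hC : ∀ n, |a n| ≤ C) (m : ℝ) (hm : 0 < m)
    (hS : Tendsto (fun n : ℕ => (∑ i ∈ Finset.range n, a i) / n) atTop (𝓝 m)) :
    Tendsto (fun x : ℝ => ∑' n : ℕ, a n * x ^ (n + 1)) (𝓝[<] (1 : ℝ)) atTop := by
  set S : ℕ → ℝ := fun n => ∑ i ∈ Finset.range n, a i with hSdef
  -- eventually S n ≥ (m/2) n
  have hev : ∀ᶠ n : ℕ in atTop, m / 2 * n ≤ S n := by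
    have h1 : ∀ᶠ n : ℕ in atTop, m / 2 < S n / n :=
      hS.eventually (eventually_gt_nhds (by linarith))
    filter_upwards [h1, eventually_gt_atTop 0] with n hn hn0
    have hn0' : (0:ℝ) < n := by exact_mod_cast hn0
    rw [lt_div_iff₀ hn0'] at hn
    linarith
  obtain ⟨N₀, hN₀⟩ := hev.exists_forall_of_atTop
  set B : ℝ := ∑ N ∈ Finset.range N₀, |S N - m / 2 * N| with hBdef
  have hB0 : 0 ≤ B := Finset.sum_nonneg fun _ _ => abs_nonneg _
  -- the key pointwise bound
  have key : ∀ x : ℝ, x ∈ Ioo (0:ℝ) 1 →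
      m / 2 * (x * (1 - x)⁻¹) - B ≤ ∑' n : ℕ, a n * x ^ (n + 1) := by
    rintro x ⟨hx0, hx1⟩
    have hxabs : |x| < 1 := abs_lt.2 ⟨by linarith, hx1⟩
    have hxn : ∀ n : ℕ, (0:ℝ) ≤ x ^ n := fun n => pow_nonneg hx0.le n
    have hxn1 : ∀ n : ℕ, x ^ n ≤ 1 := fun n => pow_le_one₀ hx0.le hx1.le
    have hgeo : Summable (fun n : ℕ => (n:ℝ) * x ^ n) := by
      simpa using summable_pow_mul_geometric_of_norm_lt_one 1 (by rwa [Real.norm_eq_abs])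
    have sum_a : Summable (fun n : ℕ => a n * x ^ (n + 1)) := by
      apply Summable.of_norm_bounded (g := fun n => C * |x| ^ (n+1))
      · exact ((summable_geometric_of_lt_one (abs_nonneg x) hxabs).mul_left C).comp_injective
          (add_left_injective 1)
      · intro n
        rw [norm_mul, Real.norm_eq_abs, Real.norm_eq_abs, abs_pow]
        exact mul_le_mul_of_nonneg_right (hC n) (pow_nonneg (abs_nonneg x) _)
    have hSb : ∀ N, |S N| ≤ C * N := by
      intro N
      calc |S N| ≤ ∑ i ∈ Finset.range N, |a i| := Finset.abs_sum_le_sum_abs _ _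
        _ ≤ ∑ i ∈ Finset.range N, C := Finset.sum_le_sum fun i _ => hC i
        _ = C * N := by simp [mul_comm]
    have hgeo' : Summable (fun n : ℕ => (n:ℝ) * |x| ^ n) := by
      have hx' : ‖|x|‖ < 1 := by rwa [Real.norm_eq_abs, abs_abs]
      simpa using summable_pow_mul_geometric_of_norm_lt_one 1 hx'
    have sum_S : Summable (fun N : ℕ => S N * x ^ N) := by
      apply Summable.of_norm_bounded (g := fun N : ℕ => C * ((N:ℝ) * |x| ^ N)) (hgeo'.mul_left C)
      intro N
      rw [norm_mul, Real.norm_eq_abs, Real.norm_eq_abs, abs_pow]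
      calc |S N| * |x| ^ N ≤ (C * N) * |x| ^ N :=
            mul_le_mul_of_nonneg_right (hSb N) (pow_nonneg (abs_nonneg x) _)
        _ = C * ((N:ℝ) * |x| ^ N) := by ring
    -- Abel identity
    have sum_S' : Summable (fun n : ℕ => S (n+1) * x ^ (n+1)) :=
      (summable_nat_add_iff 1).2 sum_S
    have h1 : ∑' n : ℕ, S (n+1) * x ^ (n+1) = ∑' N : ℕ, S N * x ^ N := by
      rw [Summable.tsum_eq_zero_add sum_S]
      simp [hSdef]
    have hstep : ∀ n : ℕ, S (n+1) * x ^ (n+1) = a n * x ^ (n+1) + x * (S n * x ^ n) := by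
      intro n
      rw [hSdef]
      simp only [Finset.sum_range_succ]
      ring
    have h2 : (∑' N : ℕ, S N * x ^ N) =
        (∑' n : ℕ, a n * x ^ (n + 1)) + x * (∑' N : ℕ, S N * x ^ N) := by
      conv_lhs => rw [← h1, tsum_congr hstep]
      rw [Summable.tsum_add sum_a (sum_S.mul_left x), tsum_mul_left]
    have hident : (∑' n : ℕ, a n * x ^ (n + 1)) = (1 - x) * ∑' N : ℕ, S N * x ^ N := by
      linear_combination -h2
    -- lower bound on T
    have hsplit : ∀ N : ℕ, S N * x ^ N = (S N - m/2*N) * x ^ N + m/2 * ((N:ℝ) * x ^ N) := by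
      intro N; ring
    have sum_diff : Summable (fun N : ℕ => (S N - m/2*N) * x ^ N) := by
      have := sum_S.sub ((hgeo.mul_left (m/2)).congr (fun N => by ring :
        ∀ N:ℕ, m/2 * ((N:ℝ) * x ^ N) = (m/2*N) * x ^ N))
      exact this.congr fun N => by ring
    have hT : (∑' N : ℕ, S N * x ^ N) =
        (∑' N : ℕ, (S N - m/2*N) * x ^ N) + m/2 * (x / (1-x)^2) := by
      rw [tsum_congr hsplit, Summable.tsum_add sum_diff (hgeo.mul_left (m/2)),
        tsum_mul_left, tsum_coe_mul_geometric_of_norm_lt_one (by rwa [Real.norm_eq_abs])]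
    have hdge : -B ≤ ∑' N : ℕ, (S N - m/2*N) * x ^ N := by
      have h3 : ∑ N ∈ Finset.range N₀, (S N - m/2*N) * x ^ N ≤
          ∑' N : ℕ, (S N - m/2*N) * x ^ N := by
        apply Summable.sum_le_tsum _ _ sum_diff
        intro N hN
        have : N₀ ≤ N := by simpa using hN
        have := hN₀ N this
        have := hxn N
        nlinarith
      have h4 : -B ≤ ∑ N ∈ Finset.range N₀, (S N - m/2*N) * x ^ N := by
        rw [hBdef, ← Finset.sum_neg_distrib]
        apply Finset.sum_le_sum
        intro N _
        have h5 : -|S N - m/2*N| ≤ S N - m/2*N := neg_abs_le _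
        have := hxn N
        have := hxn1 N
        have := abs_nonneg (S N - m/2*N)
        nlinarith
      linarith
    have h1x : (0:ℝ) < 1 - x := by linarith
    have hTge : m/2 * (x/(1-x)^2) - B ≤ ∑' N : ℕ, S N * x ^ N := by linarith
    have h6 : m/2 * (x * (1-x)⁻¹) = (1-x) * (m/2 * (x/(1-x)^2)) := by
      field_simp
    have hmul2 := mul_le_mul_of_nonneg_left hTge h1x.le
    rw [hident]
    nlinarith [mul_nonneg hx0.le hB0]
  -- tendsto of the lower bound
  have hsub : Tendsto (fun x : ℝ => 1 - x) (𝓝[<] (1:ℝ)) (𝓝[>] (0:ℝ)) := by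
    apply tendsto_nhdsWithin_of_tendsto_nhds_of_eventually_within
    · have h7 : Tendsto (fun x : ℝ => 1 - x) (𝓝 (1:ℝ)) (𝓝 (0:ℝ)) :=
        Continuous.tendsto' (by continuity) 1 0 (by norm_num)
      exact h7.mono_left nhdsWithin_le_nhds
    · filter_upwards [self_mem_nhdsWithin] with x hx
      exact sub_pos.2 (mem_Iio.1 hx)
  have hinv : Tendsto (fun x : ℝ => (1 - x)⁻¹) (𝓝[<] (1:ℝ)) atTop :=
    tendsto_inv_nhdsGT_zero.comp hsub
  have hxlim : Tendsto (fun x : ℝ => x) (𝓝[<] (1:ℝ)) (𝓝 (1:ℝ)) :=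
    tendsto_id.mono_left nhdsWithin_le_nhds
  have hmul : Tendsto (fun x : ℝ => x * (1 - x)⁻¹) (𝓝[<] (1:ℝ)) atTop :=
    hxlim.pos_mul_atTop one_pos hinv
  have hF : Tendsto (fun x : ℝ => m / 2 * (x * (1 - x)⁻¹) - B) (𝓝[<] (1:ℝ)) atTop := by
    apply tendsto_atTop_add_const_right
    exact hmul.const_mul_atTop (by linarith)
  apply tendsto_atTop_mono' _ _ hF
  filter_upwards [Ioo_mem_nhdsLT_of_mem (by norm_num : (1:ℝ) ∈ Ioc (0:ℝ) 1)] with x hx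
  exact key x hx

set_option maxHeartbeats 1000000 in
/-- **Concluding remark (non-uniform version of Theorem 1).** Let `D = {d₁, …, d_k}` be a set
of `k ≥ 2` distinct reals and `p₁, …, p_k > 0` probabilities summing to `1`, and let `P` be
the product measure whose coordinates are independent with `P(aₙ = d_j) = p_j`. If the
expected value `∑ p_j d_j` is positive, then almost surely `lim_{x→1⁻} ∑ aₙ xⁿ = +∞`;
if it is negative, then almost surely `lim_{x→1⁻} ∑ aₙ xⁿ = -∞`. -/
theorem random_power_series_nonzero_mean_nonuniform
(k : ℕ) (hk : 2 ≤ k) (d : Fin k → ℝ) (hd : Function.Injective d)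
    (p : Fin k → ℝ) (hp : ∀ j, 0 < p j) (hpsum : ∑ j, p j = 1)
    (P : Measure (ℕ → ℝ)) [IsProbabilityMeasure P]
    (hindep : iIndepFun (fun n (a : ℕ → ℝ) => a n) P)
    (hdist : ∀ n : ℕ,
      P.map (fun a => a n) = ∑ j, ENNReal.ofReal (p j) • Measure.dirac (d j)) :
    ((0 < ∑ j, p j * d j) →
      ∀ᵐ a ∂P,
        Tendsto (fun x : ℝ => ∑' n : ℕ, a n * x ^ (n + 1)) (𝓝[<] (1 : ℝ)) atTop) ∧
    ((∑ j, p j * d j < 0) →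
      ∀ᵐ a ∂P,
        Tendsto (fun x : ℝ => ∑' n : ℕ, a n * x ^ (n + 1)) (𝓝[<] (1 : ℝ)) atBot) := by
  set m : ℝ := ∑ j, p j * d j with hmdef
  -- integrability of a ↦ a 0
  have hmeas : ∀ n : ℕ, Measurable (fun a : ℕ → ℝ => a n) := fun n => measurable_pi_apply n
  have hint : Integrable (fun a : ℕ → ℝ => a 0) P := by
    have h := (integrable_map_measure (μ := P) (f := fun a : ℕ → ℝ => a 0) (g := id)
      measurable_id.aestronglyMeasurable (hmeas 0).aemeasurable).1
    have h2 : Integrable (id : ℝ → ℝ) (P.map (fun a : ℕ → ℝ => a 0)) := by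
      rw [hdist 0]
      apply integrable_finset_sum_measure.2
      intro j _
      apply Integrable.smul_measure _ ofReal_ne_top
      refine ⟨measurable_id.aestronglyMeasurable, ?_⟩
      simp [HasFiniteIntegral, lintegral_dirac]
    exact h h2
  -- expectation
  have hE : (∫ a, a 0 ∂P) = m := by
    have h := integral_map (μ := P) (φ := fun a : ℕ → ℝ => a 0) (f := id)
      (hmeas 0).aemeasurable measurable_id.aestronglyMeasurable
    rw [show (fun a : ℕ → ℝ => a 0) = (fun a : ℕ → ℝ => id (a 0)) from rfl, ← h, hdist 0,
      integral_finset_sum_measure]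
    · rw [hmdef]
      apply Finset.sum_congr rfl
      intro j _
      rw [integral_smul_measure, integral_dirac, smul_eq_mul, ENNReal.toReal_ofReal (hp j).le]
      rfl
    · intro j _
      apply Integrable.smul_measure _ ofReal_ne_top
      refine ⟨measurable_id.aestronglyMeasurable, ?_⟩
      simp [HasFiniteIntegral, lintegral_dirac]
  -- SLLN
  have hident : ∀ i : ℕ, IdentDistrib (fun a : ℕ → ℝ => a i) (fun a : ℕ → ℝ => a 0) P P :=
    fun i => ⟨(hmeas i).aemeasurable, (hmeas 0).aemeasurable, by rw [hdist i, hdist 0]⟩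
  have hpair : Pairwise (Function.onFun (IndepFun · · P) (fun n (a : ℕ → ℝ) => a n)) :=
    fun i j hij => hindep.indepFun hij
  have hslln := strong_law_ae_real (fun n (a : ℕ → ℝ) => a n) hint hpair hident
  rw [hE] at hslln
  -- boundedness
  have hbdd : ∀ᵐ a ∂P, ∀ n, |a n| ≤ ∑ j, |d j| := by
    rw [ae_all_iff]
    intro n
    have hms : MeasurableSet (Set.range d) := (Set.finite_range d).measurableSet
    have h0 : P.map (fun a => a n) (Set.range d)ᶜ = 0 := by
      rw [hdist n]
      simp only [Measure.coe_finset_sum, Finset.sum_apply, Measure.smul_apply, smul_eq_mul]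
      apply Finset.sum_eq_zero
      intro j _
      rw [Measure.dirac_apply]
      simp [Set.indicator_of_notMem, Set.mem_range_self]
    have h1 : P {a : ℕ → ℝ | a n ∉ Set.range d} = 0 := by
      have := Measure.map_apply (μ := P) (hmeas n) hms.compl
      rw [this] at h0
      exact h0
    filter_upwards [measure_eq_zero_iff_ae_notMem.1 h1] with a ha
    simp only [Set.mem_setOf_eq, not_not] at ha
    obtain ⟨j, hj⟩ := ha
    rw [← hj]
    exact Finset.single_le_sum (f := fun j => |d j|) (fun j _ => abs_nonneg _) (Finset.mem_univ j)
  constructor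
  · intro hm
    filter_upwards [hslln, hbdd] with a hsa hba
    exact abel_atTop a _ hba m hm hsa
  · intro hm
    filter_upwards [hslln, hbdd] with a hsa hba
    have h1 : Tendsto (fun n : ℕ => (∑ i ∈ Finset.range n, (-(a i))) / (n:ℝ)) atTop (𝓝 (-m)) := by
      simpa [neg_div] using hsa.neg
    have h2 := abel_atTop (fun n => -(a n)) _ (fun n => by simpa using hba n) (-m)
      (by linarith) h1
    have h3 : (fun x : ℝ => ∑' n : ℕ, (-(a n)) * x ^ (n+1))
        = fun x : ℝ => -∑' n : ℕ, a n * x ^ (n+1) := by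
      funext x
      rw [← tsum_neg]
      congr 1
      funext n
      ring
    rw [h3] at h2
    have h4 := tendsto_neg_atTop_atBot.comp h2
    refine h4.congr fun x => ?_
    simp [Function.comp]
end
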